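/- arXiv:1311.4854 — 6 statements merged into one kernel-verified Lean document; each statement's English description precedes it below -/
import Mathlib

section
/- For any finite set B of closed line segments in ℝ² (a barrier), the coverage R(B) = {p ∈ ℝ² : every line through p intersects the union of B} is a closed subset of ℝ². -/
open Set Pointwise

noncomputable section

abbrev Pt := EuclideanSpace ℝ (Fin 2)

/-- The line through `p` with direction `v`. -/
def lineThrough (p v : Pt) : Set Pt := {x | ∃ t : ℝ, x = p + t • v}

/-- The coverage of a set `U`: points such that every line through them meets `U`. -/
def coverage (U : Set Pt) : Set Pt :=
  {p | ∀ v : Pt, v ≠ 0 → (lineThrough p v ∩ U).Nonempty}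

/-- A barrier: a finite set of closed line segments in the plane. -/
def IsBarrier (B : Set (Set Pt)) : Prop :=
  B.Finite ∧ ∀ S ∈ B, ∃ a b : Pt, S = segment ℝ a b

/-- Unit vector at angle `θ`. -/
def dir (θ : ℝ) : Pt := (WithLp.equiv 2 (Fin 2 → ℝ)).symm ![Real.cos θ, Real.sin θ]

/-- The coverage of a barrier is a closed subset of the plane. -/
theorem coverage_isClosed (B : Set (Set Pt)) (hB : IsBarrier B) :
    IsClosed (coverage (⋃₀ B)) := by
  obtain ⟨hfin, hseg⟩ := hB
  have hU : IsCompact (⋃₀ B) := by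
    refine hfin.isCompact_sUnion ?_
    rintro S hS
    obtain ⟨a, b, rfl⟩ := hseg S hS
    rw [segment_eq_image_lineMap]
    exact isCompact_Icc.image (AffineMap.lineMap_continuous)
  have key : coverage (⋃₀ B) =
      ⋂ v ∈ {v : Pt | v ≠ 0}, ((⋃₀ B) + (Submodule.span ℝ {v} : Set Pt)) := by
    ext p
    simp only [coverage, mem_setOf_eq, mem_iInter₂]
    constructor
    · intro h v hv
      obtain ⟨x, ⟨t, rfl⟩, hxU⟩ := h v hv
      refine ⟨p + t • v, hxU, -t • v, ?_, by module⟩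
      exact Submodule.mem_span_singleton.2 ⟨-t, rfl⟩
    · intro h v hv
      obtain ⟨u, hu, w, hw, hpw⟩ := h v hv
      obtain ⟨r, rfl⟩ := Submodule.mem_span_singleton.1 hw
      exact ⟨p + (-r) • v, ⟨-r, rfl⟩, by
        have : u = p + (-r) • v := by rw [← hpw]; module
        rwa [← this]⟩
  rw [key]
  refine isClosed_biInter fun v hv => ?_
  exact (Submodule.span ℝ {v}).closed_of_finiteDimensional.add_left_of_isCompact hU
end
end

section
/- If the union of a barrier B is a connected set that is not contained in a single line, then R(B) equals the convex hull of ⋃B. -/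
open Set

noncomputable section

lemma pt_ext {x y : Pt} (h : ∀ i, x i = y i) : x = y := WithLp.ofLp_injective 2 (funext h)

lemma exists_eq_smul {v w : Pt} (hv : v ≠ 0)
    (h : v 0 * w 1 - v 1 * w 0 = 0) : ∃ t : ℝ, w = t • v := by
  rw [sub_eq_zero] at h
  by_cases h0 : v 0 = 0
  · have h1 : v 1 ≠ 0 := by
      intro h1
      apply hv
      apply pt_ext
      intro i
      fin_cases i <;> simp [h0, h1]
    refine ⟨w 1 / v 1, pt_ext fun i => ?_⟩
    have hw0 : w 0 = 0 := by
      have := h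
      rw [h0] at this
      simp at this
      rcases this with h' | h'
      · exact absurd h' h1
      · exact h'
    fin_cases i <;> simp [PiLp.smul_apply, smul_eq_mul, h0, hw0]
    field_simp
  · refine ⟨w 0 / v 0, pt_ext fun i => ?_⟩
    fin_cases i <;> simp [PiLp.smul_apply, smul_eq_mul]
    · field_simp
    · field_simp
      linarith [h]

lemma pt_decomp (x : Pt) :
    x = x 0 • EuclideanSpace.single (0 : Fin 2) (1 : ℝ)
      + x 1 • EuclideanSpace.single (1 : Fin 2) (1 : ℝ) := by
  apply pt_ext
  intro i
  fin_cases i <;>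
    simp [PiLp.add_apply, PiLp.smul_apply, EuclideanSpace.single_apply]

/-- If the union of a barrier is connected and not collinear, the coverage is the
convex hull of the union. -/
theorem coverage_of_connected (B : Set (Set Pt)) (hB : IsBarrier B)
    (hconn : IsConnected (⋃₀ B)) (hcol : ¬ Collinear ℝ (⋃₀ B)) :
    coverage (⋃₀ B) = convexHull ℝ (⋃₀ B) := by
  obtain ⟨hfin, hseg⟩ := hB
  set U : Set Pt := ⋃₀ B with hUdef
  -- U is nonempty
  have hUne : U.Nonempty := by
    rcases U.eq_empty_or_nonempty with h | h
    · exact absurd (h ▸ collinear_empty ℝ Pt) hcol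
    · exact h
  -- endpoints
  choose! f g hfg using hseg
  set E : Set Pt := (f '' B) ∪ (g '' B) with hEdef
  have hEfin : E.Finite := (hfin.image f).union (hfin.image g)
  have hUE : U ⊆ convexHull ℝ E := by
    rintro x ⟨S, hS, hx⟩
    rw [hfg S hS] at hx
    exact segment_subset_convexHull (Set.mem_union_left _ (Set.mem_image_of_mem f hS))
      (Set.mem_union_right _ (Set.mem_image_of_mem g hS)) hx
  have hEU : E ⊆ U := by
    rintro x (⟨S, hS, rfl⟩ | ⟨S, hS, rfl⟩)
    · refine ⟨S, hS, ?_⟩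
      have h' := left_mem_segment ℝ (f S) (g S)
      rwa [← hfg S hS] at h'
    · refine ⟨S, hS, ?_⟩
      have h' := right_mem_segment ℝ (f S) (g S)
      rwa [← hfg S hS] at h'
  have hhull : convexHull ℝ U = convexHull ℝ E :=
    le_antisymm (convexHull_min hUE (convex_convexHull ℝ E)) (convexHull_mono hEU)
  have hclosed : IsClosed (convexHull ℝ U) := by
    rw [hhull]
    exact (hEfin.isCompact_convexHull (𝕜 := ℝ)).isClosed
  apply Set.Subset.antisymm
  · -- coverage ⊆ hull
    intro p hp
    by_contra hph
    obtain ⟨φ, u, hu1, hu2⟩ :=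
      geometric_hahn_banach_point_closed (convex_convexHull ℝ U) hclosed hph
    obtain ⟨x0, hx0⟩ := hUne
    have hx0h : u < φ x0 := hu2 x0 (subset_convexHull ℝ U hx0)
    set a : ℝ := φ (EuclideanSpace.single (0 : Fin 2) (1 : ℝ)) with ha
    set b : ℝ := φ (EuclideanSpace.single (1 : Fin 2) (1 : ℝ)) with hb
    have hφeval : ∀ x : Pt, φ x = x 0 * a + x 1 * b := by
      intro x
      conv_lhs => rw [pt_decomp x]
      simp [map_add, map_smul, smul_eq_mul, ha, hb]
    set v : Pt := b • EuclideanSpace.single (0 : Fin 2) (1 : ℝ)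
      - a • EuclideanSpace.single (1 : Fin 2) (1 : ℝ) with hvdef
    have hφv : φ v = 0 := by
      simp only [hvdef, map_sub, map_smul, smul_eq_mul, ← ha, ← hb]
      ring
    have hvne : v ≠ 0 := by
      intro hv0
      have hab : a = 0 ∧ b = 0 := by
        constructor
        · have := congrArg (fun w : Pt => w 1) hv0
          simpa [hvdef, PiLp.sub_apply, PiLp.smul_apply, smul_eq_mul,
            EuclideanSpace.single_apply] using this
        · have := congrArg (fun w : Pt => w 0) hv0
          simpa [hvdef, PiLp.sub_apply, PiLp.smul_apply, smul_eq_mul,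
            EuclideanSpace.single_apply] using this
      have hp0 : φ p = 0 := by rw [hφeval, hab.1, hab.2]; ring
      have hx00 : φ x0 = 0 := by rw [hφeval, hab.1, hab.2]; ring
      rw [hp0] at hu1
      rw [hx00] at hx0h
      linarith
    obtain ⟨x, ⟨t, rfl⟩, hxU⟩ := hp v hvne
    have h1 : φ (p + t • v) = φ p := by
      rw [map_add, map_smul, hφv, smul_eq_mul, mul_zero, add_zero]
    have h2 : u < φ (p + t • v) := hu2 _ (subset_convexHull ℝ U hxU)
    rw [h1] at h2
    linarith
  · -- hull ⊆ coverage
    intro p hp v hv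
    set φ : Pt →L[ℝ] ℝ :=
      v 0 • (EuclideanSpace.proj (1 : Fin 2) : Pt →L[ℝ] ℝ)
        - v 1 • (EuclideanSpace.proj (0 : Fin 2) : Pt →L[ℝ] ℝ) with hφdef
    have hφeval : ∀ x : Pt, φ x = v 0 * x 1 - v 1 * x 0 := by
      intro x
      simp [hφdef, ContinuousLinearMap.sub_apply, ContinuousLinearMap.smul_apply,
        smul_eq_mul]
    -- image of U under φ is convex
    have hconv : Convex ℝ (φ '' U) := by
      rw [convex_iff_ordConnected]
      exact ((hconn.isPreconnected).image φ φ.continuous.continuousOn).ordConnected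
    have himg : φ '' (convexHull ℝ U) = convexHull ℝ (φ '' U) := by
      have := (φ : Pt →ₗ[ℝ] ℝ).image_convexHull U
      exact this
    have hpmem : φ p ∈ φ '' U := by
      have h1 : φ p ∈ φ '' (convexHull ℝ U) := ⟨p, hp, rfl⟩
      rw [himg, hconv.convexHull_eq] at h1
      exact h1
    obtain ⟨c, hcU, hc⟩ := hpmem
    have hker : v 0 * (c - p) 1 - v 1 * (c - p) 0 = 0 := by
      have : φ (c - p) = 0 := by rw [map_sub, hc, sub_self]
      rw [hφeval] at this
      simpa [PiLp.sub_apply] using this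
    obtain ⟨t, ht⟩ := exists_eq_smul hv hker
    refine ⟨c, ⟨t, ?_⟩, hcU⟩
    rw [← ht]
    abel
end
end

section
/- Let B be a barrier and K a connected component region given by the convex hull of a connected sub-barrier B_i. If a point p lies strictly outside K and K has nonempty interior, then the set of lines through p meeting K forms a closed double wedge: there exist two lines through p tangent to K such that a line through p meets K if and only if it lies (in angle) between these two tangent lines. -/
open Set

noncomputable section

/-- A line (as a set) is tangent to K if it meets K and K lies in one of the
closed halfplanes it bounds. -/
def IsTangentTo (L K : Set Pt) : Prop :=
  (L ∩ K).Nonempty ∧ ∃ f : Pt →L[ℝ] ℝ, f ≠ 0 ∧ ∃ c : ℝ,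
    L ⊆ {x | f x = c} ∧ K ⊆ {x | f x ≤ c}

open Real RealInnerProductSpace

@[simp] lemma dir_zero (θ : ℝ) : dir θ 0 = Real.cos θ := rfl
@[simp] lemma dir_one (θ : ℝ) : dir θ 1 = Real.sin θ := rfl

lemma inner_pt (x y : Pt) : ⟪x, y⟫ = x 0 * y 0 + x 1 * y 1 := by
  simp [PiLp.inner_apply, Fin.sum_univ_two, RCLike.inner_apply]; ring

lemma inner_dir (φ : ℝ) (y : Pt) : ⟪dir φ, y⟫ = Real.cos φ * y 0 + Real.sin φ * y 1 := by
  rw [inner_pt]; rfl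

lemma inner_dir_dir (φ θ : ℝ) : ⟪dir φ, dir θ⟫ = Real.cos (θ - φ) := by
  rw [inner_dir, Real.cos_sub]
  show _ * Real.cos θ + _ * Real.sin θ = _; ring

lemma decomp (φ : ℝ) (x : Pt) :
    x = ⟪dir φ, x⟫ • dir φ + ⟪dir (φ + π/2), x⟫ • dir (φ + π/2) := by
  have hc : Real.cos (φ + π/2) = -Real.sin φ := Real.cos_add_pi_div_two φ
  have hs : Real.sin (φ + π/2) = Real.cos φ := Real.sin_add_pi_div_two φ
  set y := ⟪dir φ, x⟫ • dir φ + ⟪dir (φ + π/2), x⟫ • dir (φ + π/2) with hy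
  have h0 : x 0 = y 0 := by
    have h2 : y 0 = ⟪dir φ, x⟫ * Real.cos φ + ⟪dir (φ + π/2), x⟫ * Real.cos (φ + π/2) := rfl
    rw [h2, inner_pt, inner_pt, dir_zero, dir_one, dir_zero, dir_one, hc, hs]
    linear_combination (-x 0) * (Real.sin_sq_add_cos_sq φ)
  have h1 : x 1 = y 1 := by
    have h2 : y 1 = ⟪dir φ, x⟫ * Real.sin φ + ⟪dir (φ + π/2), x⟫ * Real.sin (φ + π/2) := rfl
    rw [h2, inner_pt, inner_pt, dir_zero, dir_one, dir_zero, dir_one, hc, hs]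
    linear_combination (-x 1) * (Real.sin_sq_add_cos_sq φ)
  ext i; fin_cases i; exacts [h0, h1]

lemma dir_add_int_mul_pi (θ : ℝ) (k : ℤ) : dir (θ + k * π) = ((-1:ℝ)^k) • dir θ := by
  ext i
  fin_cases i
  · show Real.cos (θ + k * π) = (-1:ℝ)^k * Real.cos θ
    exact Real.cos_add_int_mul_pi θ k
  · show Real.sin (θ + k * π) = (-1:ℝ)^k * Real.sin θ
    exact Real.sin_add_int_mul_pi θ k

lemma lineThrough_smul (p v : Pt) (c : ℝ) (hc : c ≠ 0) :
    lineThrough p (c • v) = lineThrough p v := by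
  ext x
  constructor
  · rintro ⟨t, rfl⟩; exact ⟨t * c, by rw [mul_smul]⟩
  · rintro ⟨t, rfl⟩; exact ⟨t / c, by rw [smul_smul, div_mul_cancel₀ _ hc]⟩

lemma lineThrough_dir_add_int (p : Pt) (θ : ℝ) (k : ℤ) :
    lineThrough p (dir (θ + k * π)) = lineThrough p (dir θ) := by
  rw [dir_add_int_mul_pi, lineThrough_smul _ _ _ (zpow_ne_zero _ (by norm_num : (-1:ℝ) ≠ 0))]

lemma reduce_angle (γ : ℝ) : ∃ θ ∈ Ico (0:ℝ) π, ∃ k : ℤ, θ = γ + k * π := by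
  have hπ := Real.pi_pos
  refine ⟨γ + (-⌊γ / π⌋ : ℤ) * π, ⟨?_, ?_⟩, -⌊γ / π⌋, rfl⟩
  · push_cast
    have h1 : (⌊γ / π⌋ : ℝ) ≤ γ / π := Int.floor_le _
    have := mul_le_mul_of_nonneg_right h1 hπ.le
    rw [div_mul_cancel₀ _ hπ.ne'] at this
    linarith
  · push_cast
    have h2 : γ / π < ⌊γ / π⌋ + 1 := Int.lt_floor_add_one _
    have := mul_lt_mul_of_pos_right h2 hπ
    rw [add_mul, div_mul_cancel₀ _ hπ.ne'] at this
    linarith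

lemma shift_lemma (x : ℝ) (hc : Real.cos x ≠ 0) :
    ∃ k : ℤ, x + k * π ∈ Ioo (-(π/2)) (π/2) := by
  refine ⟨-⌊x / π + 1/2⌋, ?_⟩
  have hπ := Real.pi_pos
  have h1 : (⌊x / π + 1/2⌋ : ℝ) ≤ x / π + 1/2 := Int.floor_le _
  have h2 : x / π + 1/2 < ⌊x / π + 1/2⌋ + 1 := Int.lt_floor_add_one _
  have hle : -(π/2) ≤ x + (-⌊x / π + 1/2⌋ : ℤ) * π := by
    push_cast
    have := mul_le_mul_of_nonneg_right h1 hπ.le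
    rw [add_mul, div_mul_cancel₀ _ hπ.ne'] at this
    linarith
  have hlt : x + (-⌊x / π + 1/2⌋ : ℤ) * π < π/2 := by
    push_cast
    have := mul_lt_mul_of_pos_right h2 hπ
    rw [add_mul, div_mul_cancel₀ _ hπ.ne'] at this
    linarith
  have hne : -(π/2) ≠ x + (-⌊x / π + 1/2⌋ : ℤ) * π := by
    intro h
    have h0 : Real.cos (x + ((-⌊x / π + 1/2⌋ : ℤ)) * π) = 0 := by
      rw [← h, Real.cos_neg, Real.cos_pi_div_two]
    rw [Real.cos_add_int_mul_pi] at h0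
    rcases mul_eq_zero.1 h0 with h' | h'
    · exact zpow_ne_zero _ (by norm_num : (-1:ℝ) ≠ 0) h'
    · exact hc h'
  exact ⟨lt_of_le_of_ne hle hne, hlt⟩

set_option maxHeartbeats 1000000 in
/-- For a point p strictly outside a compact convex set K with nonempty interior,
the lines through p meeting K form a closed double wedge: there are two tangent
lines through p, and a line through p meets K iff its angle lies between the
angles of the two tangent lines (mod π). -/
theorem double_wedge (B : Set (Set Pt)) (hB : IsBarrier B) (Bi : Set (Set Pt))
    (hBi : Bi ⊆ B) (hconn : IsConnected (⋃₀ Bi)) (K : Set Pt)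
    (hK : K = convexHull ℝ (⋃₀ Bi)) (hKint : (interior K).Nonempty)
    (p : Pt) (hp : p ∉ K) :
    ∃ θ₁ θ₂ : ℝ, θ₁ ∈ Ico (0:ℝ) Real.pi ∧ θ₂ ∈ Ico (0:ℝ) Real.pi ∧
      IsTangentTo (lineThrough p (dir θ₁)) K ∧ IsTangentTo (lineThrough p (dir θ₂)) K ∧
      ∃ α β : ℝ, α ≤ β ∧ β < α + Real.pi ∧
        ({lineThrough p (dir θ₁), lineThrough p (dir θ₂)} : Set (Set Pt)) =
          {lineThrough p (dir α), lineThrough p (dir β)} ∧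
        ∀ θ : ℝ, (lineThrough p (dir θ) ∩ K).Nonempty ↔
          ∃ k : ℤ, θ + k * Real.pi ∈ Icc α β := by
  -- K is the convex hull of a finite set of endpoints
  have hBifin : Bi.Finite := hB.1.subset hBi
  have hseg : ∀ S ∈ Bi, ∃ a b : Pt, S = segment ℝ a b := fun S hS => hB.2 S (hBi hS)
  choose! ea eb hab using hseg
  set E : Set Pt := ⋃ S ∈ Bi, {ea S, eb S} with hE
  have hEfin : E.Finite := hBifin.biUnion fun S _ => (finite_singleton _).insert _
  have hEsub : E ⊆ ⋃₀ Bi := by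
    rintro x hx
    simp only [hE, mem_iUnion, exists_prop] at hx
    obtain ⟨S, hS, hx⟩ := hx
    have hSseg := hab S hS
    rcases hx with rfl | rfl
    · refine ⟨S, hS, ?_⟩
      have h := left_mem_segment ℝ (ea S) (eb S)
      rwa [← hSseg] at h
    · refine ⟨S, hS, ?_⟩
      have h := right_mem_segment ℝ (ea S) (eb S)
      rwa [← hSseg] at h
  have hKE : K = convexHull ℝ E := by
    apply le_antisymm
    · rw [hK]
      apply convexHull_min _ (convex_convexHull ℝ E)
      rintro x ⟨S, hS, hxS⟩
      rw [hab S hS, ← convexHull_pair] at hxS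
      refine convexHull_mono ?_ hxS
      intro y hy
      exact mem_iUnion₂.2 ⟨S, hS, hy⟩
    · rw [hK]
      exact convexHull_mono hEsub
  have hKcomp : IsCompact K := hKE ▸ hEfin.isCompact_convexHull ℝ
  have hKconv : Convex ℝ K := hK ▸ convex_convexHull ℝ _
  have hKcl : IsClosed K := hKcomp.isClosed
  have hKne : K.Nonempty := hKint.mono interior_subset
  -- separating hyperplane
  obtain ⟨f, c, hfp, hfK⟩ := geometric_hahn_banach_point_closed hKconv hKcl hp
  set n : Pt := (InnerProductSpace.toDual ℝ Pt).symm f with hn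
  have hinner : ∀ y : Pt, ⟪n, y⟫ = f y := fun y => InnerProductSpace.toDual_symm_apply
  have hnne : n ≠ 0 := by
    intro h0
    obtain ⟨x0, hx0⟩ := hKne
    have h1 : f p = 0 := by rw [← hinner p, h0, inner_zero_left]
    have h2 : f x0 = 0 := by rw [← hinner x0, h0, inner_zero_left]
    have := hfK x0 hx0; rw [h1] at hfp; rw [h2] at this; linarith
  set r : ℝ := ‖n‖ with hr
  have hrpos : 0 < r := norm_pos_iff.2 hnne
  have hr2 : r^2 = n 0^2 + n 1^2 := by
    rw [hr, EuclideanSpace.norm_eq, Real.sq_sqrt (by positivity)]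
    simp [Fin.sum_univ_two, sq]
  -- the angle of the normal vector
  set z : ℂ := ⟨n 0 / r, n 1 / r⟩ with hz
  have habs : ‖z‖ = 1 := by
    rw [hz, Complex.norm_def, Complex.normSq_mk]
    rw [show n 0 / r * (n 0 / r) + n 1 / r * (n 1 / r) = 1 by
      field_simp; nlinarith [hr2]]
    exact Real.sqrt_one
  have hzne : z ≠ 0 := by intro h0; rw [h0] at habs; simp at habs
  set φ : ℝ := z.arg with hφ
  have hcos : Real.cos φ = n 0 / r := by rw [hφ, Complex.cos_arg hzne, habs]; simp [hz]
  have hsin : Real.sin φ = n 1 / r := by rw [hφ, Complex.sin_arg, habs]; simp [hz]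
  set u : Pt := dir φ with hu
  set w : Pt := dir (φ + π/2) with hw
  have huy : ∀ y : Pt, ⟪u, y⟫ = f y / r := by
    intro y
    rw [hu, inner_dir, hcos, hsin, ← hinner y, inner_pt]
    field_simp
  -- affine coordinates relative to p
  set A : Pt → ℝ := fun x => ⟪u, x - p⟫ with hA
  set W : Pt → ℝ := fun x => ⟪w, x - p⟫ with hW
  have hApos : ∀ x ∈ K, 0 < A x := by
    intro x hx
    have hAval : A x = (f x - f p) / r := by
      simp only [hA]; rw [huy, map_sub]
    rw [hAval]
    have := hfK x hx
    exact div_pos (by linarith) hrpos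
  set sK : Pt → ℝ := fun x => W x / A x with hsK
  have hAcont : Continuous A := by
    rw [hA]; exact (innerSL ℝ u).continuous.comp (continuous_id.sub continuous_const)
  have hWcont : Continuous W := by
    rw [hW]; exact (innerSL ℝ w).continuous.comp (continuous_id.sub continuous_const)
  have hscont : ContinuousOn sK K := by
    rw [hsK]
    exact ContinuousOn.div hWcont.continuousOn hAcont.continuousOn
      (fun x hx => (hApos x hx).ne')
  obtain ⟨xm, hxmK, hxm⟩ := hKcomp.exists_isMinOn hKne hscont
  obtain ⟨xM, hxMK, hxM⟩ := hKcomp.exists_isMaxOn hKne hscont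
  have hxm' : ∀ x ∈ K, sK xm ≤ sK x := fun x hx => hxm hx
  have hxM' : ∀ x ∈ K, sK x ≤ sK xM := fun x hx => hxM hx
  set m : ℝ := sK xm with hm
  set M : ℝ := sK xM with hM
  have hmM : m ≤ M := hxm' xM hxMK
  have hWxval : ∀ x ∈ K, W x = sK x * A x := by
    intro x hx
    simp only [hsK]; rw [div_mul_cancel₀ _ (hApos x hx).ne']
  have hrange : ∀ σ : ℝ, m ≤ σ → σ ≤ M → ∃ x ∈ K, sK x = σ := by
    intro σ h1 h2
    have hsub := (hKconv.isPreconnected).intermediate_value hxmK hxMK hscont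
    obtain ⟨x, hxK, hxval⟩ := hsub ⟨h1, h2⟩
    exact ⟨x, hxK, hxval⟩
  -- the key meeting criterion
  have hmeet : ∀ v : Pt,
      (⟪u, v⟫ ≠ 0 ∧ m ≤ ⟪w, v⟫ / ⟪u, v⟫ ∧ ⟪w, v⟫ / ⟪u, v⟫ ≤ M) ↔
        (lineThrough p v ∩ K).Nonempty := by
    intro v
    constructor
    · rintro ⟨hb, h1, h2⟩
      obtain ⟨x, hxK, hxval⟩ := hrange _ h1 h2
      refine ⟨x, ⟨A x / ⟪u, v⟫, ?_⟩, hxK⟩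
      have hxd : x - p = A x • u + W x • w := by
        have := decomp φ (x - p)
        rw [← hu, ← hw] at this
        exact this
      have hvd : v = ⟪u, v⟫ • u + ⟪w, v⟫ • w := by
        have := decomp φ v
        rw [← hu, ← hw] at this
        exact this
      have hWxv : W x = (⟪w, v⟫ / ⟪u, v⟫) * A x := by
        rw [hWxval x hxK, hxval]
      have hsc1 : (A x / ⟪u, v⟫) * ⟪u, v⟫ = A x := div_mul_cancel₀ _ hb
      have hsc2 : (A x / ⟪u, v⟫) * ⟪w, v⟫ = W x := by
        rw [hWxv]; field_simp
      have key : x - p = (A x / ⟪u, v⟫) • v := by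
        calc x - p = A x • u + W x • w := hxd
        _ = ((A x / ⟪u, v⟫) * ⟪u, v⟫) • u + ((A x / ⟪u, v⟫) * ⟪w, v⟫) • w := by
            rw [hsc1, hsc2]
        _ = (A x / ⟪u, v⟫) • (⟪u, v⟫ • u + ⟪w, v⟫ • w) := by
            rw [smul_add, smul_smul, smul_smul]
        _ = (A x / ⟪u, v⟫) • v := by rw [← hvd]
      rw [← sub_eq_iff_eq_add']
      exact key
    · rintro ⟨x, ⟨t, rfl⟩, hxK⟩
      have hAx := hApos _ hxK
      have hAxt : A (p + t • v) = t * ⟪u, v⟫ := by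
        simp only [hA]; rw [add_sub_cancel_left, real_inner_smul_right]
      have hWxt : W (p + t • v) = t * ⟪w, v⟫ := by
        simp only [hW]; rw [add_sub_cancel_left, real_inner_smul_right]
      have ht : t ≠ 0 := by
        rintro rfl; rw [hAxt, zero_mul] at hAx; exact lt_irrefl _ hAx
      have hb : ⟪u, v⟫ ≠ 0 := by
        intro h0; rw [hAxt, h0, mul_zero] at hAx; exact lt_irrefl _ hAx
      have hsval : sK (p + t • v) = ⟪w, v⟫ / ⟪u, v⟫ := by
        simp only [hsK]; rw [hAxt, hWxt, mul_div_mul_left _ _ ht]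
      exact ⟨hb, by rw [← hsval]; exact hxm' _ hxK, by rw [← hsval]; exact hxM' _ hxK⟩
  -- the two critical angles
  set α : ℝ := φ + arctan m with hα
  set β : ℝ := φ + arctan M with hβ
  have harctan_m := Real.neg_pi_div_two_lt_arctan m
  have harctan_m' := Real.arctan_lt_pi_div_two m
  have harctan_M := Real.neg_pi_div_two_lt_arctan M
  have harctan_M' := Real.arctan_lt_pi_div_two M
  have hαβ : α ≤ β := by
    have := Real.arctan_strictMono.monotone hmM
    rw [hα, hβ]; linarith
  have hβπ : β < α + π := by rw [hα, hβ]; linarith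
  have hudir : ∀ θ : ℝ, ⟪u, dir θ⟫ = Real.cos (θ - φ) := fun θ => inner_dir_dir φ θ
  have hwdir : ∀ θ : ℝ, ⟪w, dir θ⟫ = Real.sin (θ - φ) := by
    intro θ
    have h1 : ⟪dir (φ + π/2), dir θ⟫ = Real.cos (θ - (φ + π/2)) := inner_dir_dir _ _
    rw [hw, h1, show θ - (φ + π/2) = (θ - φ) - π/2 by ring, Real.cos_sub_pi_div_two]
  -- the double-wedge criterion in terms of angles
  have hiff : ∀ θ : ℝ, (lineThrough p (dir θ) ∩ K).Nonempty ↔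
      ∃ k : ℤ, θ + k * π ∈ Icc α β := by
    intro θ
    rw [← hmeet (dir θ), hudir, hwdir]
    constructor
    · rintro ⟨hcθ, h1, h2⟩
      obtain ⟨k, hk1, hk2⟩ := shift_lemma (θ - φ) hcθ
      have htan' : Real.tan ((θ - φ) + k*π) = Real.sin (θ - φ) / Real.cos (θ - φ) := by
        rw [Real.tan_periodic.int_mul k (θ - φ), Real.tan_eq_sin_div_cos]
      have harct : Real.arctan (Real.tan ((θ - φ) + k*π)) = (θ - φ) + k*π :=
        Real.arctan_tan hk1 hk2
      have h1' : Real.arctan m ≤ (θ - φ) + k*π := by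
        rw [← harct]
        exact Real.arctan_strictMono.monotone (by rw [htan']; exact h1)
      have h2' : (θ - φ) + k*π ≤ Real.arctan M := by
        rw [← harct]
        exact Real.arctan_strictMono.monotone (by rw [htan']; exact h2)
      refine ⟨k, ?_, ?_⟩
      · rw [hα]; linarith
      · rw [hβ]; linarith
    · rintro ⟨k, hk1, hk2⟩
      rw [hα] at hk1; rw [hβ] at hk2
      have hk1' : Real.arctan m ≤ (θ - φ) + k*π := by linarith
      have hk2' : (θ - φ) + k*π ≤ Real.arctan M := by linarith
      have hmemI : (θ - φ) + k*π ∈ Ioo (-(π/2)) (π/2) :=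
        ⟨lt_of_lt_of_le harctan_m hk1', lt_of_le_of_lt hk2' harctan_M'⟩
      have hcpos : 0 < Real.cos ((θ - φ) + k*π) := Real.cos_pos_of_mem_Ioo hmemI
      have hcne : Real.cos (θ - φ) ≠ 0 := by
        intro h0
        rw [Real.cos_add_int_mul_pi, h0, mul_zero] at hcpos
        exact lt_irrefl _ hcpos
      have htan' : Real.sin (θ - φ) / Real.cos (θ - φ) = Real.tan ((θ - φ) + k*π) := by
        rw [Real.tan_periodic.int_mul k (θ - φ), Real.tan_eq_sin_div_cos]
      refine ⟨hcne, ?_, ?_⟩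
      · rw [htan', ← Real.tan_arctan m]
        exact Real.strictMonoOn_tan.monotoneOn ⟨harctan_m, harctan_m'⟩ hmemI hk1'
      · rw [htan', ← Real.tan_arctan M]
        exact Real.strictMonoOn_tan.monotoneOn hmemI ⟨harctan_M, harctan_M'⟩ hk2'
  -- inner products of the frame vectors
  have huu : ⟪u, u⟫ = 1 := by rw [hu, inner_dir_dir, sub_self, Real.cos_zero]
  have hww : ⟪w, w⟫ = 1 := by rw [hw, inner_dir_dir, sub_self, Real.cos_zero]
  have huw : ⟪u, w⟫ = 0 := by
    rw [hu, hw, inner_dir_dir, add_sub_cancel_left, Real.cos_pi_div_two]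
  have hwu : ⟪w, u⟫ = 0 := by rw [real_inner_comm, huw]
  -- tangency of the line at angle β
  have htanβ : IsTangentTo (lineThrough p (dir β)) K := by
    constructor
    · refine (hiff β).2 ⟨0, ?_⟩
      simp only [Int.cast_zero, zero_mul, add_zero, mem_Icc]
      exact ⟨hαβ, le_rfl⟩
    · refine ⟨innerSL ℝ (w - M • u), ?_, ⟪w - M • u, p⟫, ?_, ?_⟩
      · intro h0
        have h1 : ⟪w - M • u, w - M • u⟫ = (0:ℝ) := by
          have h := ContinuousLinearMap.ext_iff.1 h0 (w - M • u)
          simpa only [innerSL_apply_apply, ContinuousLinearMap.zero_apply] using h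
        have h2 : ⟪w - M • u, w - M • u⟫ = 1 + M^2 := by
          rw [inner_sub_left, inner_sub_right, inner_sub_right,
            real_inner_smul_left, real_inner_smul_left,
            real_inner_smul_right, real_inner_smul_right, huu, hww, huw, hwu]
          ring
        linarith [sq_nonneg M]
      · rintro x ⟨t, rfl⟩
        simp only [mem_setOf_eq, innerSL_apply_apply]
        rw [inner_add_right, real_inner_smul_right]
        have hz0 : ⟪w - M • u, dir β⟫ = 0 := by
          rw [inner_sub_left, real_inner_smul_left, hwdir, hudir, hβ,
            add_sub_cancel_left, Real.sin_arctan, Real.cos_arctan]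
          ring
        rw [hz0, mul_zero, add_zero]
      · intro x hx
        simp only [mem_setOf_eq, innerSL_apply_apply]
        rw [inner_sub_left, inner_sub_left, real_inner_smul_left, real_inner_smul_left]
        have h1 : ⟪w, x⟫ - ⟪w, p⟫ = W x := by
          simp only [hW]; rw [inner_sub_right]
        have h2 : ⟪u, x⟫ - ⟪u, p⟫ = A x := by
          simp only [hA]; rw [inner_sub_right]
        have h3 : sK x ≤ M := hxM' x hx
        have h4 := hWxval x hx
        have h6 : W x - M * A x ≤ 0 := by
          rw [h4]
          have := mul_le_mul_of_nonneg_right h3 (hApos x hx).le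
          linarith
        have h7 : M * (⟪u, x⟫ - ⟪u, p⟫) = M * A x := by rw [h2]
        linarith [h6, h1, h7]
  -- tangency of the line at angle α
  have htanα : IsTangentTo (lineThrough p (dir α)) K := by
    constructor
    · refine (hiff α).2 ⟨0, ?_⟩
      simp only [Int.cast_zero, zero_mul, add_zero, mem_Icc]
      exact ⟨le_rfl, hαβ⟩
    · refine ⟨innerSL ℝ (m • u - w), ?_, ⟪m • u - w, p⟫, ?_, ?_⟩
      · intro h0
        have h1 : ⟪m • u - w, m • u - w⟫ = (0:ℝ) := by
          have h := ContinuousLinearMap.ext_iff.1 h0 (m • u - w)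
          simpa only [innerSL_apply_apply, ContinuousLinearMap.zero_apply] using h
        have h2 : ⟪m • u - w, m • u - w⟫ = m^2 + 1 := by
          rw [inner_sub_left, inner_sub_right, inner_sub_right,
            real_inner_smul_left, real_inner_smul_left,
            real_inner_smul_right, real_inner_smul_right, huu, hww, huw, hwu]
          ring
        linarith [sq_nonneg m]
      · rintro x ⟨t, rfl⟩
        simp only [mem_setOf_eq, innerSL_apply_apply]
        rw [inner_add_right, real_inner_smul_right]
        have hz0 : ⟪m • u - w, dir α⟫ = 0 := by
          rw [inner_sub_left, real_inner_smul_left, hwdir, hudir, hα,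
            add_sub_cancel_left, Real.sin_arctan, Real.cos_arctan]
          ring
        rw [hz0, mul_zero, add_zero]
      · intro x hx
        simp only [mem_setOf_eq, innerSL_apply_apply]
        rw [inner_sub_left, inner_sub_left, real_inner_smul_left, real_inner_smul_left]
        have h1 : ⟪w, x⟫ - ⟪w, p⟫ = W x := by
          simp only [hW]; rw [inner_sub_right]
        have h2 : ⟪u, x⟫ - ⟪u, p⟫ = A x := by
          simp only [hA]; rw [inner_sub_right]
        have h3 : m ≤ sK x := hxm' x hx
        have h4 := hWxval x hx
        have h6 : m * A x - W x ≤ 0 := by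
          rw [h4]
          have := mul_le_mul_of_nonneg_right h3 (hApos x hx).le
          linarith
        have h7 : m * (⟪u, x⟫ - ⟪u, p⟫) = m * A x := by rw [h2]
        linarith [h6, h1, h7]
  -- reduce the two angles to [0, π)
  obtain ⟨θ₁, hθ₁, k1, hk1⟩ := reduce_angle α
  obtain ⟨θ₂, hθ₂, k2, hk2⟩ := reduce_angle β
  have hL1 : lineThrough p (dir θ₁) = lineThrough p (dir α) := by
    rw [hk1, lineThrough_dir_add_int]
  have hL2 : lineThrough p (dir θ₂) = lineThrough p (dir β) := by
    rw [hk2, lineThrough_dir_add_int]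
  refine ⟨θ₁, θ₂, hθ₁, hθ₂, ?_, ?_, α, β, hαβ, hβπ, ?_, hiff⟩
  · rw [hL1]; exact htanα
  · rw [hL2]; exact htanβ
  · rw [hL1, hL2]
end
end

section
/- Every connected component of the coverage R(B) of a barrier B that has nonempty interior is convex. -/
open Set

noncomputable section

/-- A linear functional vanishing on `v`. -/
def lfun (v : Pt) : Pt →L[ℝ] ℝ :=
  v 1 • (EuclideanSpace.proj (0 : Fin 2)) - v 0 • (EuclideanSpace.proj (1 : Fin 2))

lemma lfun_apply (v p : Pt) : lfun v p = v 1 * p 0 - v 0 * p 1 := by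
  simp [lfun, smul_eq_mul]

lemma mem_lineThrough_iff {q v : Pt} (hv : v ≠ 0) (p : Pt) :
    p ∈ lineThrough q v ↔ lfun v p = lfun v q := by
  constructor
  · rintro ⟨t, rfl⟩
    simp only [lfun_apply, PiLp.add_apply, PiLp.smul_apply, smul_eq_mul]
    ring
  · intro h
    simp only [lfun_apply] at h
    have hv01 : v 0 ≠ 0 ∨ v 1 ≠ 0 := by
      by_contra hc
      push_neg at hc
      exact hv (by ext i; fin_cases i <;> simp [hc.1, hc.2])
    rcases hv01 with h0 | h1
    · refine ⟨(p 0 - q 0) / v 0, ?_⟩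
      ext i
      fin_cases i <;> simp only [PiLp.add_apply, PiLp.smul_apply, smul_eq_mul, Fin.zero_eta, Fin.mk_one, Fin.isValue] <;>
        field_simp <;> linarith [h]
    · refine ⟨(p 1 - q 1) / v 1, ?_⟩
      ext i
      fin_cases i <;> simp only [PiLp.add_apply, PiLp.smul_apply, smul_eq_mul, Fin.zero_eta, Fin.mk_one, Fin.isValue] <;>
        field_simp <;> linarith [h]

lemma lineThrough_mem_eq {q v y : Pt} (hy : y ∈ lineThrough q v) :
    lineThrough y v = lineThrough q v := by
  obtain ⟨t, rfl⟩ := hy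
  ext p
  constructor
  · rintro ⟨s, rfl⟩; exact ⟨t + s, by module⟩
  · rintro ⟨s, rfl⟩; exact ⟨s - t, by module⟩

lemma combo_lt {a b u1 u2 c : ℝ} (ha : 0 ≤ a) (hb : 0 ≤ b) (hab : a + b = 1)
    (h1 : c < u1) (h2 : c < u2) : c < a * u1 + b * u2 := by
  rcases eq_or_lt_of_le ha with h | h
  · have hb1 : b = 1 := by linarith
    simp [← h, hb1, h2]
  · have h3 : a * c + b * c = c := by rw [← add_mul, hab, one_mul]
    linarith [mul_nonneg hb (sub_nonneg.2 h2.le), mul_pos h (sub_pos.2 h1)]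

/-- Every connected component of the coverage with nonempty interior is convex. -/
theorem component_convex (B : Set (Set Pt)) (hB : IsBarrier B) (x : Pt)
    (hx : x ∈ coverage (⋃₀ B))
    (hint : (interior (connectedComponentIn (coverage (⋃₀ B)) x)).Nonempty) :
    Convex ℝ (connectedComponentIn (coverage (⋃₀ B)) x) := by
  set U : Set Pt := ⋃₀ B with hU
  set C : Set Pt := connectedComponentIn (coverage U) x with hC
  -- points of a line missing U are not in the coverage
  have line_not_cov : ∀ q v : Pt, v ≠ 0 → lineThrough q v ∩ U = ∅ →
      ∀ y ∈ lineThrough q v, y ∉ coverage U := by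
    intro q v hv hm y hy hyc
    have h1 := hyc v hv
    rw [lineThrough_mem_eq hy, hm] at h1
    exact Set.not_nonempty_empty h1
  have hC_cov : C ⊆ coverage U := connectedComponentIn_subset _ _
  have hxC : x ∈ C := mem_connectedComponentIn hx
  have ne_on_C : ∀ q v : Pt, v ≠ 0 → lineThrough q v ∩ U = ∅ →
      ∀ c ∈ C, lfun v c ≠ lfun v q := by
    intro q v hv hm c hc h
    exact line_not_cov q v hv hm c ((mem_lineThrough_iff hv c).2 h) (hC_cov hc)
  -- the candidate convex set: intersection of open halfplanes of free lines, on x's side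
  set H : Set Pt := {p : Pt | ∀ q v : Pt, v ≠ 0 → lineThrough q v ∩ U = ∅ →
      (lfun v q < lfun v x → lfun v q < lfun v p) ∧
      (lfun v x < lfun v q → lfun v p < lfun v q)} with hH
  have hCH : C ⊆ H := by
    intro c hc q v hv hm
    have himg : IsPreconnected ((lfun v) '' C) :=
      isPreconnected_connectedComponentIn.image _ (lfun v).continuous.continuousOn
    have hoc := himg.ordConnected
    have hcne := ne_on_C q v hv hm c hc
    constructor
    · intro hqx
      by_contra hle
      push_neg at hle
      have hlt : lfun v c < lfun v q := lt_of_le_of_ne hle hcne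
      obtain ⟨y, hyC, hyq⟩ := hoc.out ⟨c, hc, rfl⟩ ⟨x, hxC, rfl⟩ ⟨hlt.le, hqx.le⟩
      exact ne_on_C q v hv hm y hyC hyq
    · intro hxq
      by_contra hle
      push_neg at hle
      have hlt : lfun v q < lfun v c := lt_of_le_of_ne hle (Ne.symm hcne)
      obtain ⟨y, hyC, hyq⟩ := hoc.out ⟨x, hxC, rfl⟩ ⟨c, hc, rfl⟩ ⟨hxq.le, hlt.le⟩
      exact ne_on_C q v hv hm y hyC hyq
  have hHcov : H ⊆ coverage U := by
    intro p hp v hv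
    by_contra hne
    rw [not_nonempty_iff_eq_empty] at hne
    have hxne : lfun v x ≠ lfun v p := by
      intro h
      exact line_not_cov p v hv hne x ((mem_lineThrough_iff hv x).2 h) hx
    rcases lt_or_gt_of_ne hxne with h | h
    · exact lt_irrefl _ ((hp p v hv hne).2 h)
    · exact lt_irrefl _ ((hp p v hv hne).1 h)
  have hHconv : Convex ℝ H := by
    intro p1 h1 p2 h2 a b ha hb hab
    intro q v hv hm
    have e : lfun v (a • p1 + b • p2) = a * lfun v p1 + b * lfun v p2 := by
      simp [map_add, map_smul, smul_eq_mul]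
    constructor
    · intro hside
      rw [e]
      exact combo_lt ha hb hab ((h1 q v hv hm).1 hside) ((h2 q v hv hm).1 hside)
    · intro hside
      rw [e]
      have k1 := (h1 q v hv hm).2 hside
      have k2 := (h2 q v hv hm).2 hside
      have := combo_lt ha hb hab (neg_lt_neg k1) (neg_lt_neg k2)
      nlinarith [this]
  have hHC : H ⊆ C := hHconv.isPreconnected.subset_connectedComponentIn (hCH hxC) hHcov
  have heq : C = H := Subset.antisymm hCH hHC
  rw [heq]
  exact hHconv
end
end

section
/- There exists a barrier B consisting of three line segments and a point p ∉ ⋃B such that p ∈ R(B) but there is an ε > 0 with the property that every point q ≠ p with ‖q − p‖ < ε satisfies q ∉ R(B); that is, {p} is an isolated point of R(B) not lying on B. -/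
open Set

noncomputable section

/- auxiliary -/

def pt (a b : ℝ) : Pt := (WithLp.equiv 2 (Fin 2 → ℝ)).symm ![a, b]

@[simp] lemma pt_apply0 (a b : ℝ) : pt a b 0 = a := rfl
@[simp] lemma pt_apply1 (a b : ℝ) : pt a b 1 = b := rfl
@[simp] lemma Pt_add_apply (x y : Pt) (i : Fin 2) : (x + y) i = x i + y i := rfl
@[simp] lemma Pt_smul_apply (t : ℝ) (x : Pt) (i : Fin 2) : (t • x) i = t * x i := rfl
@[simp] lemma Pt_zero_apply (i : Fin 2) : (0 : Pt) i = 0 := rfl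

lemma pt_ne_zero {a b : ℝ} (h : a ≠ 0 ∨ b ≠ 0) : pt a b ≠ (0 : Pt) := by
  intro he
  rcases h with h | h
  · exact h (by rw [← pt_apply0 a b, he]; rfl)
  · exact h (by rw [← pt_apply1 a b, he]; rfl)

lemma mem_seg_iff {a0 a1 b0 b1 : ℝ} {x : Pt} :
    x ∈ segment ℝ (pt a0 a1) (pt b0 b1) ↔
      ∃ u : ℝ, 0 ≤ u ∧ u ≤ 1 ∧ x 0 = (1-u)*a0 + u*b0 ∧ x 1 = (1-u)*a1 + u*b1 := by
  rw [segment_eq_image]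
  constructor
  · rintro ⟨u, ⟨h0, h1⟩, rfl⟩
    exact ⟨u, h0, h1, by simp, by simp⟩
  · rintro ⟨u, h0, h1, e0, e1⟩
    refine ⟨u, ⟨h0, h1⟩, ?_⟩
    refine (PiLp.ext fun i => ?_).symm
    fin_cases i <;> simp [e0, e1]

/-- The pinwheel barrier. -/
def bar : Fin 3 → Pt × Pt :=
  ![(pt 1 0, pt (1/2) (Real.sqrt 3/2)),
    (pt (-(1/2)) (-(Real.sqrt 3/2)), pt (1/2) (-(Real.sqrt 3/2))),
    (pt (-(1/2)) (Real.sqrt 3/2), pt (-1) 0)]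

lemma memU_iff (x : Pt) :
    x ∈ (⋃ i, segment ℝ (bar i).1 (bar i).2) ↔
      (∃ u : ℝ, 0 ≤ u ∧ u ≤ 1 ∧ x 0 = (1-u)*1 + u*(1/2) ∧
        x 1 = (1-u)*0 + u*(Real.sqrt 3/2)) ∨
      (∃ u : ℝ, 0 ≤ u ∧ u ≤ 1 ∧ x 0 = (1-u)*(-(1/2)) + u*(1/2) ∧
        x 1 = (1-u)*(-(Real.sqrt 3/2)) + u*(-(Real.sqrt 3/2))) ∨
      (∃ u : ℝ, 0 ≤ u ∧ u ≤ 1 ∧ x 0 = (1-u)*(-(1/2)) + u*(-1) ∧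
        x 1 = (1-u)*(Real.sqrt 3/2) + u*0) := by
  rw [mem_iUnion]
  constructor
  · rintro ⟨i, hi⟩
    fin_cases i
    · exact Or.inl (mem_seg_iff.mp hi)
    · exact Or.inr (Or.inl (mem_seg_iff.mp hi))
    · exact Or.inr (Or.inr (mem_seg_iff.mp hi))
  · rintro (h | h | h)
    · exact ⟨0, mem_seg_iff.mpr h⟩
    · exact ⟨1, mem_seg_iff.mpr h⟩
    · exact ⟨2, mem_seg_iff.mpr h⟩

lemma sqrt3_sq : Real.sqrt 3 ^ 2 = 3 := Real.sq_sqrt (by norm_num)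
lemma sqrt3_gt_one : 1 < Real.sqrt 3 := by
  nlinarith [sqrt3_sq, Real.sqrt_nonneg 3]
lemma sqrt3_lt_two : Real.sqrt 3 < 2 := by
  nlinarith [sqrt3_sq, Real.sqrt_nonneg 3]
lemma sqrt3_pos : (0:ℝ) < Real.sqrt 3 := by linarith [sqrt3_gt_one]

/-- The origin is not on the barrier. -/
lemma zero_notMem_U : (0 : Pt) ∉ (⋃ i, segment ℝ (bar i).1 (bar i).2) := by
  rw [memU_iff]
  rintro (⟨u, h0, h1, e0, e1⟩ | ⟨u, h0, h1, e0, e1⟩ | ⟨u, h0, h1, e0, e1⟩) <;>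
    simp only [Pt_zero_apply] at e0 e1
  · linarith
  · have h : (0:ℝ) = -(Real.sqrt 3/2) := by linear_combination e1
    nlinarith [sqrt3_gt_one]
  · linarith

/-- The origin is in the coverage. -/
lemma zero_mem_coverage : (0 : Pt) ∈ coverage (⋃ i, segment ℝ (bar i).1 (bar i).2) := by
  intro v hv
  set r := Real.sqrt 3 with hr
  have hr0 : 0 < r := sqrt3_pos
  have hab : ¬(v 0 = 0 ∧ v 1 = 0) := by
    rintro ⟨h0, h1⟩
    exact hv (PiLp.ext fun i => by fin_cases i <;> simp [h0, h1])
  by_cases hb : v 1 = 0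
  · have ha : v 0 ≠ 0 := fun h => hab ⟨h, hb⟩
    refine ⟨(1 / v 0) • v, ⟨1 / v 0, (zero_add _).symm⟩, ?_⟩
    rw [memU_iff]
    left
    refine ⟨0, le_refl _, by norm_num, ?_, ?_⟩
    · simp only [Pt_smul_apply]; field_simp; norm_num
    · simp only [Pt_smul_apply, hb]; ring
  · by_cases h2 : r * |v 0| ≤ |v 1|
    · -- hits the bottom segment S₁
      refine ⟨(-r / (2 * v 1)) • v, ⟨-r / (2 * v 1), (zero_add _).symm⟩, ?_⟩
      rw [memU_iff]
      right; left
      have hb' : (0:ℝ) < |v 1| := abs_pos.mpr hb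
      have key : |r * v 0 / (2 * v 1)| ≤ 1/2 := by
        rw [abs_div, abs_mul, abs_mul, abs_of_nonneg hr0.le]
        rw [div_le_iff₀ (by positivity)]
        have : |(2:ℝ)| = 2 := by norm_num
        rw [this]
        nlinarith
      obtain ⟨k1, k2⟩ := abs_le.mp key
      refine ⟨1/2 - r * v 0 / (2 * v 1), by linarith, by linarith, ?_, ?_⟩
      · simp only [Pt_smul_apply]; field_simp; ring
      · simp only [Pt_smul_apply]; field_simp; ring
    · push_neg at h2
      have ha : v 0 ≠ 0 := by
        intro h
        rw [h] at h2
        simp at h2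
        nlinarith [abs_nonneg (v 1)]
      rcases lt_trichotomy (v 0 * v 1) 0 with hab' | hab' | hab'
      · -- opposite signs: hits S₂ (the upper-left segment)
        have hD : v 1 - r * v 0 ≠ 0 := by
          rcases lt_or_gt_of_ne hb with hbneg | hbpos
          · have ha' : 0 < v 0 := by nlinarith
            have : v 1 - r * v 0 < 0 := by nlinarith
            exact this.ne
          · have ha' : v 0 < 0 := by nlinarith
            have : 0 < v 1 - r * v 0 := by nlinarith
            exact this.ne'
        refine ⟨(r / (v 1 - r * v 0)) • v, ⟨r / (v 1 - r * v 0), (zero_add _).symm⟩, ?_⟩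
        rw [memU_iff]
        right; right
        have hu0 : 0 ≤ 2 * v 1 / (v 1 - r * v 0) := by
          rcases lt_or_gt_of_ne hb with hbneg | hbpos
          · have ha' : 0 < v 0 := by nlinarith
            have hDn : v 1 - r * v 0 < 0 := by nlinarith
            rw [div_nonneg_iff]
            right
            constructor <;> nlinarith
          · have ha' : v 0 < 0 := by nlinarith
            have hDp : 0 < v 1 - r * v 0 := by nlinarith
            positivity
        have hu1 : 2 * v 1 / (v 1 - r * v 0) ≤ 1 := by
          rcases lt_or_gt_of_ne hb with hbneg | hbpos
          · have ha' : 0 < v 0 := by nlinarith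
            have hDn : v 1 - r * v 0 < 0 := by nlinarith
            rw [div_le_iff_of_neg hDn]
            have habs : |v 1| = -(v 1) := abs_of_neg hbneg
            have habs' : |v 0| = v 0 := abs_of_pos ha'
            rw [habs, habs'] at h2
            nlinarith
          · have ha' : v 0 < 0 := by nlinarith
            have hDp : 0 < v 1 - r * v 0 := by nlinarith
            rw [div_le_iff₀ hDp]
            have habs : |v 1| = v 1 := abs_of_pos hbpos
            have habs' : |v 0| = -(v 0) := abs_of_neg ha'
            rw [habs, habs'] at h2
            nlinarith
        refine ⟨1 - 2 * v 1 / (v 1 - r * v 0), by linarith, by linarith, ?_, ?_⟩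
        · simp only [Pt_smul_apply]; field_simp; ring
        · simp only [Pt_smul_apply]; field_simp; ring
      · exact absurd hab' (mul_ne_zero ha hb)
      · -- same signs: hits S₀
        have hD : r * v 0 + v 1 ≠ 0 := by
          rcases lt_or_gt_of_ne hb with hbneg | hbpos
          · have ha' : v 0 < 0 := by nlinarith
            have : r * v 0 + v 1 < 0 := by nlinarith
            exact this.ne
          · have ha' : 0 < v 0 := by nlinarith
            have : 0 < r * v 0 + v 1 := by nlinarith
            exact this.ne'
        refine ⟨(r / (r * v 0 + v 1)) • v, ⟨r / (r * v 0 + v 1), (zero_add _).symm⟩, ?_⟩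
        rw [memU_iff]
        left
        have hu0 : 0 ≤ 2 * v 1 / (r * v 0 + v 1) := by
          rcases lt_or_gt_of_ne hb with hbneg | hbpos
          · have ha' : v 0 < 0 := by nlinarith
            have hDn : r * v 0 + v 1 < 0 := by nlinarith
            rw [div_nonneg_iff]
            right
            constructor <;> nlinarith
          · have ha' : 0 < v 0 := by nlinarith
            have hDp : 0 < r * v 0 + v 1 := by nlinarith
            positivity
        have hu1 : 2 * v 1 / (r * v 0 + v 1) ≤ 1 := by
          rcases lt_or_gt_of_ne hb with hbneg | hbpos
          · have ha' : v 0 < 0 := by nlinarith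
            have hDn : r * v 0 + v 1 < 0 := by nlinarith
            rw [div_le_iff_of_neg hDn]
            have habs : |v 1| = -(v 1) := abs_of_neg hbneg
            have habs' : |v 0| = -(v 0) := abs_of_neg ha'
            rw [habs, habs'] at h2
            nlinarith
          · have ha' : 0 < v 0 := by nlinarith
            have hDp : 0 < r * v 0 + v 1 := by nlinarith
            rw [div_le_iff₀ hDp]
            have habs : |v 1| = v 1 := abs_of_pos hbpos
            have habs' : |v 0| = v 0 := abs_of_pos ha'
            rw [habs, habs'] at h2
            nlinarith
        refine ⟨2 * v 1 / (r * v 0 + v 1), hu0, hu1, ?_, ?_⟩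
        · simp only [Pt_smul_apply]; field_simp; ring
        · simp only [Pt_smul_apply]; field_simp; ring

set_option maxHeartbeats 1000000 in
/-- There is a barrier of three segments whose coverage has an isolated point off the
barrier. -/
theorem exists_isolated_coverage_point :
    ∃ s : Fin 3 → Pt × Pt, ∃ p : Pt,
      p ∉ (⋃ i, segment ℝ (s i).1 (s i).2) ∧
      p ∈ coverage (⋃ i, segment ℝ (s i).1 (s i).2) ∧
      ∃ ε : ℝ, 0 < ε ∧ ∀ q : Pt, q ≠ p → ‖q - p‖ < ε →
        q ∉ coverage (⋃ i, segment ℝ (s i).1 (s i).2) := by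
  refine ⟨bar, 0, zero_notMem_U, zero_mem_coverage, 1/2, by norm_num, ?_⟩
  intro q hq hqnorm hcov
  set r := Real.sqrt 3 with hr
  have hr0 : 0 < r := sqrt3_pos
  have hr1 : 1 < r := sqrt3_gt_one
  have hr2 : r < 2 := sqrt3_lt_two
  -- coordinate bounds
  rw [sub_zero] at hqnorm
  have hnsq : (q 0)^2 + (q 1)^2 < 1/4 := by
    have h1 : ‖q‖^2 < 1/4 := by nlinarith [norm_nonneg q]
    have h2 : ‖q‖^2 = (q 0)^2 + (q 1)^2 := by
      rw [EuclideanSpace.norm_eq, Real.sq_sqrt (by positivity)]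
      simp [Fin.sum_univ_two, sq_abs]
    linarith [h2 ▸ h1]
  have hb00 : -(1/2) < q 0 := by nlinarith [sq_nonneg (q 1), sq_nonneg (q 0 + 1/2)]
  have hb01 : q 0 < 1/2 := by nlinarith [sq_nonneg (q 1), sq_nonneg (q 0 - 1/2)]
  have hb10 : -(1/2) < q 1 := by nlinarith [sq_nonneg (q 0), sq_nonneg (q 1 + 1/2)]
  have hb11 : q 1 < 1/2 := by nlinarith [sq_nonneg (q 0), sq_nonneg (q 1 - 1/2)]
  have hne : ¬(q 0 = 0 ∧ q 1 = 0) := by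
    rintro ⟨h0, h1⟩
    exact hq (PiLp.ext fun i => by fin_cases i <;> simp [h0, h1])
  rcases lt_or_ge (q 1) 0 with hq1 | hq1
  · -- below the x-axis: horizontal line misses everything
    obtain ⟨x, ⟨t, rfl⟩, hU⟩ := hcov (pt 1 0) (pt_ne_zero (Or.inl one_ne_zero))
    rw [memU_iff] at hU
    have hx1 : (q + t • pt 1 0) 1 = q 1 := by simp
    rcases hU with ⟨u, h0, h1, e0, e1⟩ | ⟨u, h0, h1, e0, e1⟩ | ⟨u, h0, h1, e0, e1⟩ <;>
      rw [hx1] at e1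
    · nlinarith [mul_nonneg h0 hr0.le]
    · have : q 1 = -(r/2) := by linear_combination e1
      nlinarith
    · nlinarith [mul_nonneg (by linarith : (0:ℝ) ≤ 1 - u) hr0.le]
  · rcases le_or_gt (q 0) 0 with hq0 | hq0
    · -- upper-left region: line of slope √3 misses everything
      have hc : r * q 0 - q 1 < 0 := by
        rcases eq_or_lt_of_le hq0 with h | h
        · have h1 : q 1 ≠ 0 := fun hh => hne ⟨h, hh⟩
          have h2 : 0 < q 1 := lt_of_le_of_ne hq1 (Ne.symm h1)
          nlinarith
        · nlinarith
      obtain ⟨x, ⟨t, rfl⟩, hU⟩ := hcov (pt 1 r) (pt_ne_zero (Or.inl one_ne_zero))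
      rw [memU_iff] at hU
      have hx0 : (q + t • pt 1 r) 0 = q 0 + t := by simp
      have hx1 : (q + t • pt 1 r) 1 = q 1 + t * r := by simp
      rcases hU with ⟨u, h0, h1, e0, e1⟩ | ⟨u, h0, h1, e0, e1⟩ | ⟨u, h0, h1, e0, e1⟩ <;>
        rw [hx0] at e0 <;> rw [hx1] at e1
      · have hval : r * q 0 - q 1 = r - r * u := by linear_combination r * e0 - e1
        nlinarith [mul_nonneg (by linarith : (0:ℝ) ≤ 1 - u) hr0.le]
      · have hval : r * q 0 - q 1 = r * u := by linear_combination r * e0 - e1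
        nlinarith [mul_nonneg h0 hr0.le]
      · have hval : r * q 0 - q 1 = -r := by linear_combination r * e0 - e1
        nlinarith [mul_pos hr0 (by linarith : (0:ℝ) < q 0 + 1/2)]
    · -- right region: line of slope -√3 misses everything
      have hc : 0 < r * q 0 + q 1 := by nlinarith
      obtain ⟨x, ⟨t, rfl⟩, hU⟩ := hcov (pt 1 (-r)) (pt_ne_zero (Or.inl one_ne_zero))
      rw [memU_iff] at hU
      have hx0 : (q + t • pt 1 (-r)) 0 = q 0 + t := by simp
      have hx1 : (q + t • pt 1 (-r)) 1 = q 1 - t * r := by simp; ring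
      rcases hU with ⟨u, h0, h1, e0, e1⟩ | ⟨u, h0, h1, e0, e1⟩ | ⟨u, h0, h1, e0, e1⟩ <;>
        rw [hx0] at e0 <;> rw [hx1] at e1
      · have hval : r * q 0 + q 1 = r := by linear_combination r * e0 + e1
        nlinarith [mul_pos hr0 (by linarith : (0:ℝ) < 1/2 - q 0)]
      · have hval : r * q 0 + q 1 = r * u - r := by linear_combination r * e0 + e1
        nlinarith [mul_nonneg (by linarith : (0:ℝ) ≤ 1 - u) hr0.le]
      · have hval : r * q 0 + q 1 = -(r * u) := by linear_combination r * e0 + e1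
        nlinarith [mul_nonneg h0 hr0.le]
end
end

section
/- Let K₁, K₂ be disjoint compact convex sets in ℝ², each with nonempty interior. Then there are exactly four lines tangent to both K₁ and K₂ (two outer and two inner common tangents). -/
open Set

noncomputable section

/-- A set is a line. -/
def IsLine (L : Set Pt) : Prop := ∃ p v : Pt, v ≠ 0 ∧ L = lineThrough p v

/- ### Auxiliary machinery -/

open scoped RealInnerProductSpace

namespace FourTangents

/-- Rotation by 90 degrees. -/
def J (x : Pt) : Pt := (WithLp.equiv 2 (Fin 2 → ℝ)).symm ![-(x 1), x 0]

lemma inner_expand (x y : Pt) : ⟪x, y⟫ = x 0 * y 0 + x 1 * y 1 := by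
  simp [PiLp.inner_apply, Fin.sum_univ_two, RCLike.inner_apply]; ring

lemma J_J (x : Pt) : J (J x) = -x := by ext i; fin_cases i <;> simp [J]

lemma J_smul (a : ℝ) (x : Pt) : J (a • x) = a • J x := by
  ext i; fin_cases i <;> simp [J]

lemma J_neg (x : Pt) : J (-x) = -(J x) := by
  have h : (-x : Pt) = (-1 : ℝ) • x := by simp
  rw [h, J_smul]; simp

lemma inner_J_left (x y : Pt) : ⟪J x, y⟫ = -⟪x, J y⟫ := by
  simp [inner_expand, J]

lemma inner_J_J (x y : Pt) : ⟪J x, J y⟫ = ⟪x, y⟫ := by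
  simp [inner_expand, J]; ring

lemma inner_J_self (x : Pt) : ⟪x, J x⟫ = 0 := by simp [inner_expand, J]; ring

lemma J_ne_zero {x : Pt} (hx : x ≠ 0) : J x ≠ 0 := by
  intro h
  apply hx
  have h0 : J x 0 = 0 := by rw [h]; rfl
  have h1 : J x 1 = 0 := by rw [h]; rfl
  ext i
  fin_cases i
  · simpa [J] using h1
  · simpa [J, neg_eq_zero] using h0

lemma eq_smul_J {v z : Pt} (hv : v ≠ 0) (h : ⟪v, z⟫ = 0) : ∃ t : ℝ, z = t • J v := by
  rw [inner_expand] at h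
  have hv' : v 0 ≠ 0 ∨ v 1 ≠ 0 := by
    by_contra hc
    push_neg at hc
    exact hv (by ext i; fin_cases i <;> simp [hc.1, hc.2])
  rcases hv' with h0 | h1
  · refine ⟨z 1 / v 0, ?_⟩
    ext i; fin_cases i <;> simp [J] <;> field_simp <;> linarith
  · refine ⟨-(z 0) / v 1, ?_⟩
    ext i; fin_cases i <;> simp [J] <;> field_simp <;> linarith

lemma norm_J (x : Pt) : ‖J x‖ = ‖x‖ := by
  have h : ‖J x‖ ^ 2 = ‖x‖ ^ 2 := by
    rw [← real_inner_self_eq_norm_sq, ← real_inner_self_eq_norm_sq, inner_J_J]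
  have := norm_nonneg (J x); have := norm_nonneg x
  nlinarith [h]

lemma key_identity (u x y : Pt) :
    ⟪x, u⟫ * ⟪u, y⟫ + ⟪x, J u⟫ * ⟪J u, y⟫ = ⟪u, u⟫ * ⟪x, y⟫ := by
  simp only [inner_expand]; simp [J]; ring

lemma norm_one_unit {u : Pt} (hu : ‖u‖ = 1) : u ≠ 0 := by
  intro h; rw [h] at hu; simp at hu

lemma norm_eq_one_of_inner {x : Pt} (h : ⟪x, x⟫ = (1:ℝ)) : ‖x‖ = 1 := by
  have h2 : ‖x‖ ^ 2 = 1 := by rw [← real_inner_self_eq_norm_sq, h]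
  nlinarith [norm_nonneg x]

/- ### Level lines -/

def lvl (u : Pt) (c : ℝ) : Set Pt := {x | ⟪x, u⟫ = c}

lemma mem_lvl {u : Pt} {c : ℝ} {x : Pt} : x ∈ lvl u c ↔ ⟪x, u⟫ = c := Iff.rfl

lemma lvl_eq_lineThrough {u p : Pt} {c : ℝ} (hu : u ≠ 0) (hp : ⟪p, u⟫ = c) :
    lvl u c = lineThrough p (J u) := by
  ext x
  constructor
  · intro hx
    have h : ⟪u, x - p⟫ = 0 := by
      rw [inner_sub_right, real_inner_comm x u, real_inner_comm p u, hp, hx]; ring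
    obtain ⟨t, ht⟩ := eq_smul_J hu h
    exact ⟨t, by rw [← ht]; abel⟩
  · rintro ⟨t, rfl⟩
    have : ⟪J u, u⟫ = 0 := by rw [real_inner_comm]; exact inner_J_self u
    simp only [mem_lvl, inner_add_left, real_inner_smul_left, this, hp]
    ring

lemma lineThrough_smul {p v : Pt} {a : ℝ} (ha : a ≠ 0) :
    lineThrough p (a • v) = lineThrough p v := by
  ext x
  constructor
  · rintro ⟨t, rfl⟩; exact ⟨t * a, by rw [mul_smul]⟩
  · rintro ⟨t, rfl⟩
    refine ⟨t / a, ?_⟩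
    rw [smul_smul, div_mul_cancel₀ _ ha]

lemma isLine_lvl {u p : Pt} {c : ℝ} (hu : u ≠ 0) (hp : ⟪p, u⟫ = c) : IsLine (lvl u c) :=
  ⟨p, J u, J_ne_zero hu, lvl_eq_lineThrough hu hp⟩

lemma innerSL_ne_zero {u : Pt} (hu : u ≠ 0) : (innerSL ℝ u : Pt →L[ℝ] ℝ) ≠ 0 := by
  intro h
  have := DFunLike.congr_fun h u
  simp only [innerSL_apply_apply, ContinuousLinearMap.zero_apply] at this
  exact hu (inner_self_eq_zero.mp this)

lemma tangent_le {u p : Pt} {c : ℝ} {K : Set Pt} (hu : u ≠ 0) (hpK : p ∈ K)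
    (hp : ⟪p, u⟫ = c) (hK : ∀ x ∈ K, ⟪x, u⟫ ≤ c) : IsTangentTo (lvl u c) K := by
  refine ⟨⟨p, hp, hpK⟩, innerSL ℝ u, innerSL_ne_zero hu, c, ?_, ?_⟩
  · intro x hx
    simp only [mem_setOf_eq, innerSL_apply_apply]
    rw [real_inner_comm x u]; exact hx
  · intro x hx
    simp only [mem_setOf_eq, innerSL_apply_apply]
    rw [real_inner_comm x u]; exact hK x hx

lemma tangent_ge {u p : Pt} {c : ℝ} {K : Set Pt} (hu : u ≠ 0) (hpK : p ∈ K)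
    (hp : ⟪p, u⟫ = c) (hK : ∀ x ∈ K, c ≤ ⟪x, u⟫) : IsTangentTo (lvl u c) K := by
  refine ⟨⟨p, hp, hpK⟩, innerSL ℝ (-u), innerSL_ne_zero (by simpa using hu), -c, ?_, ?_⟩
  · intro x hx
    have hx' : ⟪x, u⟫ = c := hx
    simp only [mem_setOf_eq, innerSL_apply_apply, inner_neg_left]
    rw [real_inner_comm x u, hx']
  · intro x hx
    have := hK x hx
    simp only [mem_setOf_eq, innerSL_apply_apply, inner_neg_left]
    rw [real_inner_comm x u]
    linarith

lemma lvl_eq_lvl {u u' : Pt} {c c' : ℝ} (hu : ‖u‖ = 1) (hu' : ‖u'‖ = 1)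
    (h : lvl u c = lvl u' c') : (u' = u ∧ c' = c) ∨ (u' = -u ∧ c' = -c) := by
  have huu : ⟪u, u⟫ = (1:ℝ) := by rw [real_inner_self_eq_norm_sq, hu]; norm_num
  have hp : (c • u) ∈ lvl u c := by
    rw [mem_lvl, real_inner_smul_left, huu, mul_one]
  have hp' : ⟪c • u, u'⟫ = c' := by rw [← mem_lvl]; rw [← h]; exact hp
  have hq : (c • u + J u) ∈ lvl u c := by
    have : ⟪J u, u⟫ = 0 := by rw [real_inner_comm]; exact inner_J_self u
    rw [mem_lvl, inner_add_left, real_inner_smul_left, huu, this]; ring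
  have hq' : ⟪c • u + J u, u'⟫ = c' := by rw [← mem_lvl, ← h]; exact hq
  have hJu : ⟪J u, u'⟫ = 0 := by
    rw [inner_add_left] at hq'; linarith [hp']
  obtain ⟨t, ht⟩ := eq_smul_J (J_ne_zero (norm_one_unit hu)) hJu
  rw [J_J] at ht
  have hnt : ‖u'‖ = |t| * ‖u‖ := by rw [ht]; simp [norm_smul]
  rw [hu, hu'] at hnt
  have habs : |t| = 1 := by linarith
  have hc' : c' = -(t * c) := by
    rw [← hp']
    rw [ht, real_inner_smul_left, real_inner_smul_right, inner_neg_right, huu]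
    ring
  rcases abs_eq (by norm_num : (0:ℝ) ≤ 1) |>.mp habs with h1 | h1
  · right
    constructor
    · rw [ht, h1]; ext i; simp
    · rw [hc', h1]; ring
  · left
    constructor
    · rw [ht, h1]; ext i; simp
    · rw [hc', h1]; ring

lemma not_flat {K : Set Pt} (hint : (interior K).Nonempty) {u : Pt} {c : ℝ} (hu : u ≠ 0)
    (h : ∀ x ∈ K, ⟪x, u⟫ = c) : False := by
  obtain ⟨x, hx⟩ := hint
  obtain ⟨ε, hε, hball⟩ := Metric.mem_nhds_iff.mp (mem_interior_iff_mem_nhds.mp hx)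
  have hxK : x ∈ K := hball (Metric.mem_ball_self hε)
  set y := x + (ε / (2 * ‖u‖)) • u with hy
  have hyK : y ∈ K := by
    apply hball
    rw [Metric.mem_ball, dist_eq_norm]
    have h' : y - x = (ε / (2 * ‖u‖)) • u := by rw [hy]; abel
    have hun : 0 < ‖u‖ := norm_pos_iff.mpr hu
    rw [h', norm_smul, Real.norm_eq_abs, abs_of_pos (by positivity),
      div_mul_eq_mul_div, div_lt_iff₀ (by positivity)]
    nlinarith [mul_pos hε hun]
  have h1 := h x hxK
  have h2 := h y hyK
  rw [hy, inner_add_left, real_inner_smul_left, h1, real_inner_self_eq_norm_sq] at h2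
  have hun : 0 < ‖u‖ := norm_pos_iff.mpr hu
  have : ε / (2 * ‖u‖) * ‖u‖ ^ 2 > 0 := by positivity
  linarith

lemma not_parallel {w p q u : Pt} {c₀ c' : ℝ} (hw : w ≠ 0) (hu : u ≠ 0)
    (hpw : ⟪p, w⟫ < c₀) (hqw : c₀ < ⟪q, w⟫) (hp : ⟪p, u⟫ = c') (hq : ⟪q, u⟫ = c') :
    ⟪u, J w⟫ ≠ 0 := by
  intro h0
  have h0' : ⟪J w, u⟫ = 0 := by rw [real_inner_comm]; exact h0
  obtain ⟨t, ht⟩ := eq_smul_J (J_ne_zero hw) h0'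
  rw [J_J] at ht
  have hts : t ≠ 0 := by
    intro h; rw [h] at ht; simp at ht; exact hu ht
  have h1 : ⟪p, u⟫ = -t * ⟪p, w⟫ := by rw [ht, inner_smul_right, inner_neg_right]; ring
  have h2 : ⟪q, u⟫ = -t * ⟪q, w⟫ := by rw [ht, inner_smul_right, inner_neg_right]; ring
  have h3 : -t * ⟪p, w⟫ = -t * ⟪q, w⟫ := by rw [← h1, ← h2, hp, hq]
  have h4 : ⟪p, w⟫ = ⟪q, w⟫ := mul_left_cancel₀ (neg_ne_zero.mpr hts) h3
  linarith

/- ### Support function -/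

def hsup (K : Set Pt) (u : Pt) : ℝ := sSup ((fun x => ⟪x, u⟫) '' K)

lemma hsup_spec {K : Set Pt} (hK : IsCompact K) (hne : K.Nonempty) (u : Pt) :
    (∀ x ∈ K, ⟪x, u⟫ ≤ hsup K u) ∧ ∃ x ∈ K, ⟪x, u⟫ = hsup K u := by
  have hcont : ContinuousOn (fun x : Pt => ⟪x, u⟫) K :=
    (continuous_inner.comp (continuous_id.prodMk continuous_const)).continuousOn
  obtain ⟨x, hxK, hmax⟩ := hK.exists_isMaxOn hne hcont
  have hg : IsGreatest ((fun x : Pt => ⟪x, u⟫) '' K) ⟪x, u⟫ := by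
    constructor
    · exact ⟨x, hxK, rfl⟩
    · rintro r ⟨y, hy, rfl⟩; exact hmax hy
  have h : hsup K u = ⟪x, u⟫ := hg.csSup_eq
  exact ⟨fun y hy => h ▸ hmax hy, ⟨x, hxK, by rw [h]⟩⟩

lemma hsup_cont {K : Set Pt} (hK : IsCompact K) (hne : K.Nonempty) :
    Continuous (fun u => hsup K u) := by
  obtain ⟨R, hR⟩ := hK.isBounded.exists_norm_le
  have key : ∀ u v : Pt, hsup K u - hsup K v ≤ R * ‖u - v‖ := by
    intro u v
    obtain ⟨x, hxK, hx⟩ := (hsup_spec hK hne u).2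
    have h1 : ⟪x, u⟫ - ⟪x, v⟫ = ⟪x, u - v⟫ := by rw [inner_sub_right]
    have h2 : ⟪x, u - v⟫ ≤ ‖x‖ * ‖u - v‖ := real_inner_le_norm x (u - v)
    have h3 : ⟪x, v⟫ ≤ hsup K v := (hsup_spec hK hne v).1 x hxK
    have h4 : ‖x‖ * ‖u - v‖ ≤ R * ‖u - v‖ :=
      mul_le_mul_of_nonneg_right (hR x hxK) (norm_nonneg _)
    linarith [hx ▸ h1]
  rw [Metric.continuous_iff]
  intro u ε hε
  have hR0 : (0:ℝ) ≤ R := le_trans (norm_nonneg _) (hR hne.choose hne.choose_spec)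
  refine ⟨ε / (R + 1), by positivity, fun v hv => ?_⟩
  rw [Real.dist_eq]
  have k1 := key v u
  have k2 := key u v
  rw [dist_eq_norm] at hv
  have hh : ‖v - u‖ = ‖u - v‖ := norm_sub_rev _ _
  have hb : R * ‖v - u‖ < ε := by
    calc R * ‖v - u‖ ≤ R * (ε / (R+1)) := mul_le_mul_of_nonneg_left (le_of_lt hv) hR0
    _ = (R * ε) / (R+1) := by ring
    _ < ε := by rw [div_lt_iff₀ (by positivity)]; nlinarith
  rw [abs_lt]
  constructor <;> nlinarith [hh]

/- ### The two kinds of common tangent lines -/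

def OuterLine (K₁ K₂ : Set Pt) (u : Pt) (c : ℝ) : Prop :=
  ‖u‖ = 1 ∧ (∃ p ∈ K₁, ⟪p, u⟫ = c) ∧ (∃ q ∈ K₂, ⟪q, u⟫ = c) ∧
    (∀ x ∈ K₁, ⟪x, u⟫ ≤ c) ∧ (∀ y ∈ K₂, ⟪y, u⟫ ≤ c)

def InnerLine (K₁ K₂ : Set Pt) (u : Pt) (c : ℝ) : Prop :=
  ‖u‖ = 1 ∧ (∃ p ∈ K₁, ⟪p, u⟫ = c) ∧ (∃ q ∈ K₂, ⟪q, u⟫ = c) ∧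
    (∀ x ∈ K₁, ⟪x, u⟫ ≤ c) ∧ (∀ y ∈ K₂, c ≤ ⟪y, u⟫)

/- ### Core algebraic uniqueness computations -/

section core
variable {u₁ u₂ w p q : Pt} {c₀ c₁ c₂ : ℝ}

lemma expand_via (hu₁ : ‖u₁‖ = 1) (x y : Pt) :
    ⟪x, y⟫ = ⟪x, u₁⟫ * ⟪u₁, y⟫ + ⟪x, J u₁⟫ * ⟪J u₁, y⟫ := by
  have h := key_identity u₁ x y
  have h1 : ⟪u₁, u₁⟫ = (1:ℝ) := by
    rw [real_inner_self_eq_norm_sq, hu₁]; norm_num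
  rw [h1, one_mul] at h
  linarith

lemma outer_core (hu₁ : ‖u₁‖ = 1)
    (s1 : 0 < ⟪u₁, J w⟫) (s2 : 0 < ⟪u₂, J w⟫) (hb : 0 < ⟪J u₁, u₂⟫)
    (hp1 : ⟪p, u₁⟫ = c₁) (hp2 : ⟪p, u₂⟫ ≤ c₂) (hpw : ⟪p, w⟫ < c₀)
    (hq2 : ⟪q, u₂⟫ = c₂) (hq1 : ⟪q, u₁⟫ ≤ c₁) (hqw : c₀ < ⟪q, w⟫) : False := by
  set a := ⟪u₁, u₂⟫ with ha
  set b := ⟪J u₁, u₂⟫ with hbdef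
  set w₁ := ⟪u₁, w⟫ with hw₁
  set w₂ := ⟪J u₁, w⟫ with hw₂def
  have hw2 : w₂ < 0 := by
    have := inner_J_left u₁ w
    rw [hw₂def, this]; linarith
  have hK : 0 < b * w₁ - a * w₂ := by
    have h := expand_via hu₁ u₂ (J w)
    have h1 : ⟪u₁, J w⟫ = -w₂ := by rw [hw₂def, inner_J_left]; ring
    have h2 : ⟪J u₁, J w⟫ = w₁ := by rw [inner_J_J, hw₁]
    have h3 : ⟪u₂, u₁⟫ = a := real_inner_comm _ _
    have h4 : ⟪u₂, J u₁⟫ = b := real_inner_comm _ _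
    rw [h1, h2, h3, h4] at h
    nlinarith [s2, h]
  have ep2 : ⟪p, u₁⟫ * a + ⟪p, J u₁⟫ * b ≤ c₂ := by
    have := expand_via hu₁ p u₂; linarith
  have epw : ⟪p, u₁⟫ * w₁ + ⟪p, J u₁⟫ * w₂ < c₀ := by
    have := expand_via hu₁ p w; linarith
  have eq2 : ⟪q, u₁⟫ * a + ⟪q, J u₁⟫ * b = c₂ := by
    have := expand_via hu₁ q u₂; linarith
  have eqw : c₀ < ⟪q, u₁⟫ * w₁ + ⟪q, J u₁⟫ * w₂ := by
    have := expand_via hu₁ q w; linarith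
  set αp := ⟪p, u₁⟫
  set βp := ⟪p, J u₁⟫
  set αq := ⟪q, u₁⟫
  set βq := ⟪q, J u₁⟫
  have A : αq * (b*w₁ - a*w₂) ≤ c₁ * (b*w₁ - a*w₂) :=
    mul_le_mul_of_nonneg_right hq1 (le_of_lt hK)
  have B : w₂ * (c₂ - a*c₁) ≤ w₂ * (βp*b) := by nlinarith [hp1, ep2, hw2]
  have C : b*(αp*w₁ + βp*w₂) < b*c₀ := by nlinarith [epw, hb]
  have D : b*c₀ < b*(αq*w₁ + βq*w₂) := by nlinarith [eqw, hb]
  have E : w₂*(αq*a + βq*b) = w₂*c₂ := by rw [eq2]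
  nlinarith [A, B, C, D, E, hp1]

lemma inner_core1 (hu₁ : ‖u₁‖ = 1)
    (s1 : 0 < ⟪u₁, J w⟫) (hb : 0 < ⟪J u₁, u₂⟫)
    (hp1 : ⟪p, u₁⟫ = c₁) (hp2 : ⟪p, u₂⟫ ≤ c₂) (hpw : ⟪p, w⟫ < c₀)
    (hq1 : ⟪q, u₁⟫ = c₁) (hq2 : c₂ ≤ ⟪q, u₂⟫) (hqw : c₀ < ⟪q, w⟫) : False := by
  set b := ⟪J u₁, u₂⟫ with hbdef
  set w₁ := ⟪u₁, w⟫ with hw₁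
  set w₂ := ⟪J u₁, w⟫ with hw₂def
  have hw2 : w₂ < 0 := by
    have := inner_J_left u₁ w
    rw [hw₂def, this]; linarith
  have ep2 : ⟪p, u₁⟫ * ⟪u₁, u₂⟫ + ⟪p, J u₁⟫ * b ≤ c₂ := by
    have := expand_via hu₁ p u₂; linarith
  have epw : ⟪p, u₁⟫ * w₁ + ⟪p, J u₁⟫ * w₂ < c₀ := by
    have := expand_via hu₁ p w; linarith
  have eq2 : c₂ ≤ ⟪q, u₁⟫ * ⟪u₁, u₂⟫ + ⟪q, J u₁⟫ * b := by
    have := expand_via hu₁ q u₂; linarith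
  have eqw : c₀ < ⟪q, u₁⟫ * w₁ + ⟪q, J u₁⟫ * w₂ := by
    have := expand_via hu₁ q w; linarith
  have hβ : ⟪p, J u₁⟫ * b ≤ ⟪q, J u₁⟫ * b := by rw [hp1] at ep2; rw [hq1] at eq2; linarith
  have hβ' : ⟪p, J u₁⟫ ≤ ⟪q, J u₁⟫ := le_of_mul_le_mul_right hβ hb
  have h1 : ⟪p, J u₁⟫ * w₂ < ⟪q, J u₁⟫ * w₂ := by rw [hp1] at epw; rw [hq1] at eqw; linarith
  nlinarith [mul_le_mul_of_nonpos_right hβ' (le_of_lt hw2), h1]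

lemma inner_core2 (hu₁ : ‖u₁‖ = 1)
    (s1 : ⟪u₁, J w⟫ < 0) (hb : ⟪J u₁, u₂⟫ < 0)
    (hp1 : ⟪p, u₁⟫ = c₁) (hp2 : ⟪p, u₂⟫ ≤ c₂) (hpw : ⟪p, w⟫ < c₀)
    (hq1 : ⟪q, u₁⟫ = c₁) (hq2 : c₂ ≤ ⟪q, u₂⟫) (hqw : c₀ < ⟪q, w⟫) : False := by
  set b := ⟪J u₁, u₂⟫ with hbdef
  set w₁ := ⟪u₁, w⟫ with hw₁
  set w₂ := ⟪J u₁, w⟫ with hw₂def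
  have hw2 : 0 < w₂ := by
    have := inner_J_left u₁ w
    rw [hw₂def, this]; linarith
  have ep2 : ⟪p, u₁⟫ * ⟪u₁, u₂⟫ + ⟪p, J u₁⟫ * b ≤ c₂ := by
    have := expand_via hu₁ p u₂; linarith
  have epw : ⟪p, u₁⟫ * w₁ + ⟪p, J u₁⟫ * w₂ < c₀ := by
    have := expand_via hu₁ p w; linarith
  have eq2 : c₂ ≤ ⟪q, u₁⟫ * ⟪u₁, u₂⟫ + ⟪q, J u₁⟫ * b := by
    have := expand_via hu₁ q u₂; linarith
  have eqw : c₀ < ⟪q, u₁⟫ * w₁ + ⟪q, J u₁⟫ * w₂ := by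
    have := expand_via hu₁ q w; linarith
  have hβ : ⟪p, J u₁⟫ * b ≤ ⟪q, J u₁⟫ * b := by rw [hp1] at ep2; rw [hq1] at eq2; linarith
  have hβ' : ⟪q, J u₁⟫ ≤ ⟪p, J u₁⟫ := by nlinarith [hβ, hb]
  have h1 : ⟪p, J u₁⟫ * w₂ < ⟪q, J u₁⟫ * w₂ := by rw [hp1] at epw; rw [hq1] at eqw; linarith
  nlinarith [mul_le_mul_of_nonneg_right hβ' (le_of_lt hw2), h1]

end core

/- ### Uniqueness of tangent lines of each kind within each semicircle -/

lemma antipodal_of_inner_J_zero {u₁ u₂ : Pt} (hu₁ : ‖u₁‖ = 1) (hu₂ : ‖u₂‖ = 1)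
    (hne : u₁ ≠ u₂) (h : ⟪J u₁, u₂⟫ = 0) : u₂ = -u₁ := by
  obtain ⟨t, ht⟩ := eq_smul_J (J_ne_zero (norm_one_unit hu₁)) h
  rw [J_J] at ht
  have hnt : ‖u₂‖ = |t| * ‖u₁‖ := by rw [ht]; simp [norm_smul]
  rw [hu₁, hu₂] at hnt
  have habs : |t| = 1 := by linarith
  rcases abs_eq (by norm_num : (0:ℝ) ≤ 1) |>.mp habs with h1 | h1
  · rw [ht, h1]; simp
  · exfalso; apply hne; rw [ht, h1]; simp

lemma outer_unique {K₁ K₂ : Set Pt} {w : Pt} {c₀ : ℝ}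
    (hw1 : ∀ x ∈ K₁, ⟪x, w⟫ < c₀) (hw2 : ∀ y ∈ K₂, c₀ < ⟪y, w⟫)
    {u₁ u₂ : Pt} {c₁ c₂ : ℝ} (h1 : OuterLine K₁ K₂ u₁ c₁) (h2 : OuterLine K₁ K₂ u₂ c₂)
    (hs : (0 < ⟪u₁, J w⟫ ∧ 0 < ⟪u₂, J w⟫) ∨ (⟪u₁, J w⟫ < 0 ∧ ⟪u₂, J w⟫ < 0)) :
    u₁ = u₂ ∧ c₁ = c₂ := by
  obtain ⟨hu₁, ⟨p₁, hp₁K, hp₁⟩, ⟨q₁, hq₁K, hq₁⟩, hb₁K₁, hb₁K₂⟩ := h1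
  obtain ⟨hu₂, ⟨p₂, hp₂K, hp₂⟩, ⟨q₂, hq₂K, hq₂⟩, hb₂K₁, hb₂K₂⟩ := h2
  by_cases heq : u₁ = u₂
  · subst heq
    refine ⟨rfl, le_antisymm ?_ ?_⟩
    · rw [← hp₁]; exact hb₂K₁ p₁ hp₁K
    · rw [← hp₂]; exact hb₁K₁ p₂ hp₂K
  exfalso
  have hb' : ⟪J u₂, u₁⟫ = -⟪J u₁, u₂⟫ := by
    rw [inner_J_left, real_inner_comm]
  rcases lt_trichotomy (⟪J u₁, u₂⟫ : ℝ) 0 with hb | hb | hb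
  · -- b < 0
    rcases hs with ⟨s1, s2⟩ | ⟨s1, s2⟩
    · exact outer_core hu₂ s2 s1 (by rw [hb']; linarith)
        hp₂ (hb₁K₁ p₂ hp₂K) (hw1 p₂ hp₂K) hq₁ (hb₂K₂ q₁ hq₁K) (hw2 q₁ hq₁K)
    · -- negative semicircle, b < 0 : swap indices and flip w
      have s1' : 0 < ⟪u₂, J (-w)⟫ := by rw [J_neg, inner_neg_right]; linarith
      have s2' : 0 < ⟪u₁, J (-w)⟫ := by rw [J_neg, inner_neg_right]; linarith
      exact outer_core hu₂ s1' s2' (by rw [hb']; linarith)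
        hq₂ (hb₁K₂ q₂ hq₂K) (show ⟪q₂, -w⟫ < -c₀ by rw [inner_neg_right]; linarith [hw2 q₂ hq₂K])
        hp₁ (hb₂K₁ p₁ hp₁K) (show -c₀ < ⟪p₁, -w⟫ by rw [inner_neg_right]; linarith [hw1 p₁ hp₁K])
  · -- b = 0 : antipodal, contradicting same semicircle
    have h2 := antipodal_of_inner_J_zero hu₁ hu₂ heq hb
    rw [h2, inner_neg_left] at hs
    rcases hs with ⟨s1, s2⟩ | ⟨s1, s2⟩ <;> linarith
  · -- b > 0
    rcases hs with ⟨s1, s2⟩ | ⟨s1, s2⟩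
    · exact outer_core hu₁ s1 s2 hb
        hp₁ (hb₂K₁ p₁ hp₁K) (hw1 p₁ hp₁K) hq₂ (hb₁K₂ q₂ hq₂K) (hw2 q₂ hq₂K)
    · have s1' : 0 < ⟪u₁, J (-w)⟫ := by rw [J_neg, inner_neg_right]; linarith
      have s2' : 0 < ⟪u₂, J (-w)⟫ := by rw [J_neg, inner_neg_right]; linarith
      exact outer_core hu₁ s1' s2' hb
        hq₁ (hb₂K₂ q₁ hq₁K) (show ⟪q₁, -w⟫ < -c₀ by rw [inner_neg_right]; linarith [hw2 q₁ hq₁K])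
        hp₂ (hb₁K₁ p₂ hp₂K) (show -c₀ < ⟪p₂, -w⟫ by rw [inner_neg_right]; linarith [hw1 p₂ hp₂K])

lemma inner_unique {K₁ K₂ : Set Pt} {w : Pt} {c₀ : ℝ}
    (hw1 : ∀ x ∈ K₁, ⟪x, w⟫ < c₀) (hw2 : ∀ y ∈ K₂, c₀ < ⟪y, w⟫)
    {u₁ u₂ : Pt} {c₁ c₂ : ℝ} (h1 : InnerLine K₁ K₂ u₁ c₁) (h2 : InnerLine K₁ K₂ u₂ c₂)
    (hs : (0 < ⟪u₁, J w⟫ ∧ 0 < ⟪u₂, J w⟫) ∨ (⟪u₁, J w⟫ < 0 ∧ ⟪u₂, J w⟫ < 0)) :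
    u₁ = u₂ ∧ c₁ = c₂ := by
  obtain ⟨hu₁, ⟨p₁, hp₁K, hp₁⟩, ⟨q₁, hq₁K, hq₁⟩, hb₁K₁, hb₁K₂⟩ := h1
  obtain ⟨hu₂, ⟨p₂, hp₂K, hp₂⟩, ⟨q₂, hq₂K, hq₂⟩, hb₂K₁, hb₂K₂⟩ := h2
  by_cases heq : u₁ = u₂
  · subst heq
    refine ⟨rfl, le_antisymm ?_ ?_⟩
    · rw [← hp₁]; exact hb₂K₁ p₁ hp₁K
    · rw [← hp₂]; exact hb₁K₁ p₂ hp₂K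
  exfalso
  have hb' : ⟪J u₂, u₁⟫ = -⟪J u₁, u₂⟫ := by
    rw [inner_J_left, real_inner_comm]
  rcases lt_trichotomy (⟪J u₁, u₂⟫ : ℝ) 0 with hb | hb | hb
  · rcases hs with ⟨s1, s2⟩ | ⟨s1, s2⟩
    · exact inner_core1 hu₂ s2 (by rw [hb']; linarith)
        hp₂ (hb₁K₁ p₂ hp₂K) (hw1 p₂ hp₂K) hq₂ (hb₁K₂ q₂ hq₂K) (hw2 q₂ hq₂K)
    · exact inner_core2 hu₁ s1 hb
        hp₁ (hb₂K₁ p₁ hp₁K) (hw1 p₁ hp₁K) hq₁ (hb₂K₂ q₁ hq₁K) (hw2 q₁ hq₁K)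
  · have h2 := antipodal_of_inner_J_zero hu₁ hu₂ heq hb
    rw [h2, inner_neg_left] at hs
    rcases hs with ⟨s1, s2⟩ | ⟨s1, s2⟩ <;> linarith
  · rcases hs with ⟨s1, s2⟩ | ⟨s1, s2⟩
    · exact inner_core1 hu₁ s1 hb
        hp₁ (hb₂K₁ p₁ hp₁K) (hw1 p₁ hp₁K) hq₁ (hb₂K₂ q₁ hq₁K) (hw2 q₁ hq₁K)
    · exact inner_core2 hu₂ s2 (by rw [hb']; linarith)
        hp₂ (hb₁K₁ p₂ hp₂K) (hw1 p₂ hp₂K) hq₂ (hb₁K₂ q₂ hq₂K) (hw2 q₂ hq₂K)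


-- normalization of an arbitrary common tangent line
lemma normalizeTangent {K₁ K₂ M : Set Pt} (hM : IsLine M) (h1 : IsTangentTo M K₁)
    (h2 : IsTangentTo M K₂) :
    ∃ u c, ‖u‖ = 1 ∧ M = lvl u c ∧ (∃ p ∈ K₁, ⟪p, u⟫ = c) ∧ (∃ q ∈ K₂, ⟪q, u⟫ = c) ∧
      (∀ x ∈ K₁, ⟪x, u⟫ ≤ c) ∧ ((∀ y ∈ K₂, ⟪y, u⟫ ≤ c) ∨ (∀ y ∈ K₂, c ≤ ⟪y, u⟫)) := by
  obtain ⟨p, v, hv, rfl⟩ := hM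
  obtain ⟨⟨x₁, hx₁M, hx₁K⟩, f₁, hf₁, c₁, hfM₁, hfK₁⟩ := h1
  obtain ⟨⟨x₂, hx₂M, hx₂K⟩, f₂, hf₂, c₂, hfM₂, hfK₂⟩ := h2
  have extract : ∀ (f : Pt →L[ℝ] ℝ) (cf : ℝ), f ≠ 0 → (lineThrough p v ⊆ {x | f x = cf}) →
      ∃ t : ℝ, t ≠ 0 ∧ ∀ x, f x = t * ⟪J v, x⟫ := by
    intro f cf hf hsub
    set z := (InnerProductSpace.toDual ℝ Pt).symm f with hzdef
    have hz : ∀ x, ⟪z, x⟫ = f x := fun x => InnerProductSpace.toDual_symm_apply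
    have hzne : z ≠ 0 := by
      intro h
      apply hf
      ext x
      rw [← hz x, h, inner_zero_left]; rfl
    have hp0 : f p = cf := hsub ⟨0, by simp⟩
    have hpv : f (p + v) = cf := hsub ⟨1, by rw [one_smul]⟩
    have hfv : f v = 0 := by
      have := map_add f p v
      rw [hpv, hp0] at this
      linarith
    have hvz : ⟪v, z⟫ = 0 := by rw [real_inner_comm z v, hz]; exact hfv
    obtain ⟨t, ht⟩ := eq_smul_J hv hvz
    refine ⟨t, ?_, fun x => ?_⟩
    · intro h0; apply hzne; rw [ht, h0, zero_smul]
    · rw [← hz x, ht, real_inner_smul_left]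
  obtain ⟨t₁, ht₁, hrep₁⟩ := extract f₁ c₁ hf₁ hfM₁
  obtain ⟨t₂, ht₂, hrep₂⟩ := extract f₂ c₂ hf₂ hfM₂
  have hvn : 0 < ‖v‖ := norm_pos_iff.mpr hv
  set n := |t₁| * ‖v‖ with hndef
  have hn : 0 < n := mul_pos (abs_pos.mpr ht₁) hvn
  set s := t₁ / n with hsdef
  have hs : s ≠ 0 := div_ne_zero ht₁ hn.ne'
  set u := s • J v with hudef
  set c := c₁ / n with hcdef
  have hu : ‖u‖ = 1 := by
    rw [hudef, norm_smul, norm_J, Real.norm_eq_abs, hsdef, abs_div, abs_of_pos hn, hndef]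
    field_simp
  have hrepu : ∀ x : Pt, ⟪x, u⟫ = s * ⟪J v, x⟫ := by
    intro x
    rw [hudef, real_inner_smul_right, real_inner_comm]
  have hMsub : ∀ x ∈ lineThrough p v, ⟪x, u⟫ = c := by
    intro x hx
    have hfx : f₁ x = c₁ := hfM₁ hx
    rw [hrep₁] at hfx
    rw [hrepu, hsdef, div_mul_eq_mul_div, hfx, hcdef]
  have hK₁b : ∀ x ∈ K₁, ⟪x, u⟫ ≤ c := by
    intro x hx
    have hfx : f₁ x ≤ c₁ := hfK₁ hx
    rw [hrep₁] at hfx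
    rw [hrepu, hsdef, div_mul_eq_mul_div, hcdef]
    exact (div_le_div_iff_of_pos_right hn).mpr hfx
  have hpu : ⟪p, u⟫ = c := hMsub p ⟨0, by simp⟩
  have hMeq : lineThrough p v = lvl u c := by
    apply Subset.antisymm
    · intro x hx; exact hMsub x hx
    · rw [lvl_eq_lineThrough (norm_one_unit hu) hpu]
      have hJu : J u = (-s) • v := by
        rw [hudef, J_smul, J_J, smul_neg, ← neg_smul]
      rw [hJu, lineThrough_smul (neg_ne_zero.mpr hs)]
  have hx₂u : ⟪x₂, u⟫ = c := hMsub x₂ hx₂M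
  have hside : ∀ y ∈ K₂, t₂ * ⟪J v, y⟫ ≤ t₂ * ⟪J v, x₂⟫ := by
    intro y hy
    have h : f₂ y ≤ c₂ := hfK₂ hy
    rw [hrep₂] at h
    have h2 : f₂ x₂ = c₂ := hfM₂ hx₂M
    rw [hrep₂] at h2
    rw [h2]; exact h
  refine ⟨u, c, hu, hMeq, ⟨x₁, hx₁K, hMsub x₁ hx₁M⟩, ⟨x₂, hx₂K, hx₂u⟩, hK₁b, ?_⟩
  have hcx₂ : c = s * ⟪J v, x₂⟫ := by rw [← hx₂u, hrepu]
  rcases ht₂.lt_or_gt with ht₂n | ht₂p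
  · -- t₂ < 0 : A x₂ ≤ A y
    have hA : ∀ y ∈ K₂, ⟪J v, x₂⟫ ≤ ⟪J v, y⟫ := by
      intro y hy
      have := hside y hy
      nlinarith
    rcases hs.lt_or_gt with hsn | hsp
    · left; intro y hy
      rw [hrepu, hcx₂]
      exact mul_le_mul_of_nonpos_left (hA y hy) hsn.le
    · right; intro y hy
      rw [hrepu, hcx₂]
      exact mul_le_mul_of_nonneg_left (hA y hy) hsp.le
  · have hA : ∀ y ∈ K₂, ⟪J v, y⟫ ≤ ⟪J v, x₂⟫ := by
      intro y hy
      have := hside y hy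
      nlinarith
    rcases hs.lt_or_gt with hsn | hsp
    · right; intro y hy
      rw [hrepu, hcx₂]
      exact mul_le_mul_of_nonpos_left (hA y hy) hsn.le
    · left; intro y hy
      rw [hrepu, hcx₂]
      exact mul_le_mul_of_nonneg_left (hA y hy) hsp.le

lemma exists_tangents {K₁ K₂ : Set Pt} (hK₁ : IsCompact K₁) (hK₂ : IsCompact K₂)
    (hne₁ : K₁.Nonempty) (hne₂ : K₂.Nonempty) {w : Pt} {c₀ : ℝ} (hw : w ≠ 0)
    (hw1 : ∀ x ∈ K₁, ⟪x, w⟫ < c₀) (hw2 : ∀ y ∈ K₂, c₀ < ⟪y, w⟫) :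
    (∃ u c, OuterLine K₁ K₂ u c ∧ 0 < ⟪u, J w⟫) ∧
    (∃ u c, OuterLine K₁ K₂ u c ∧ ⟪u, J w⟫ < 0) ∧
    (∃ u c, InnerLine K₁ K₂ u c ∧ 0 < ⟪u, J w⟫) ∧
    (∃ u c, InnerLine K₁ K₂ u c ∧ ⟪u, J w⟫ < 0) := by
  have hnw : 0 < ‖w‖ := norm_pos_iff.mpr hw
  set wh : Pt := ‖w‖⁻¹ • w with hwhdef
  have hwhw : ⟪wh, wh⟫ = (1:ℝ) := by
    rw [hwhdef, real_inner_smul_left, real_inner_smul_right, real_inner_self_eq_norm_sq]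
    field_simp
  have hwhJ : ⟪wh, J wh⟫ = 0 := inner_J_self wh
  have hJwh : ⟪J wh, wh⟫ = 0 := by rw [real_inner_comm]; exact hwhJ
  have hJwhJ : ⟪J wh, J wh⟫ = (1:ℝ) := by rw [inner_J_J]; exact hwhw
  set γ : ℝ → Pt := fun t => Real.cos t • wh + Real.sin t • J wh with hγdef
  have γcont : Continuous γ := by
    apply Continuous.add
    · exact Real.continuous_cos.smul continuous_const
    · exact Real.continuous_sin.smul continuous_const
  have γunit : ∀ t, ‖γ t‖ = 1 := by
    intro t
    apply norm_eq_one_of_inner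
    rw [hγdef]
    simp only [inner_add_left, inner_add_right, real_inner_smul_left, real_inner_smul_right,
      hwhw, hwhJ, hJwh, hJwhJ]
    nlinarith [Real.sin_sq_add_cos_sq t]
  have γJw : ∀ t, ⟪γ t, J w⟫ = Real.sin t * ‖w‖ := by
    intro t
    have h1 : ⟪wh, J w⟫ = 0 := by
      rw [hwhdef, real_inner_smul_left, inner_J_self, mul_zero]
    have h2 : ⟪J wh, J w⟫ = ‖w‖ := by
      rw [hwhdef, J_smul, real_inner_smul_left, inner_J_J, real_inner_self_eq_norm_sq]
      field_simp
    rw [hγdef]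
    simp only [inner_add_left, real_inner_smul_left, h1, h2]
    ring
  have γ0 : γ 0 = wh := by
    rw [hγdef]; simp
  have γpi : γ Real.pi = -wh := by
    rw [hγdef]; simp
  have γmpi : γ (-Real.pi) = -wh := by
    rw [hγdef]; simp
  -- endpoint estimates
  obtain ⟨p₀, hp₀⟩ := id hne₁
  obtain ⟨q₀, hq₀⟩ := id hne₂
  have e1 : hsup K₁ wh < ‖w‖⁻¹ * c₀ := by
    obtain ⟨x, hxK, hx⟩ := (hsup_spec hK₁ hne₁ wh).2
    rw [← hx, hwhdef, real_inner_smul_right]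
    have := hw1 x hxK
    exact mul_lt_mul_of_pos_left this (by positivity)
  have e2 : ‖w‖⁻¹ * c₀ < hsup K₂ wh := by
    have h := (hsup_spec hK₂ hne₂ wh).1 q₀ hq₀
    have : ‖w‖⁻¹ * c₀ < ⟪q₀, wh⟫ := by
      rw [hwhdef, real_inner_smul_right]
      exact mul_lt_mul_of_pos_left (hw2 q₀ hq₀) (by positivity)
    linarith
  have e3 : -(‖w‖⁻¹ * c₀) < hsup K₁ (-wh) := by
    have h := (hsup_spec hK₁ hne₁ (-wh)).1 p₀ hp₀
    have : -(‖w‖⁻¹ * c₀) < ⟪p₀, -wh⟫ := by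
      rw [inner_neg_right, hwhdef, real_inner_smul_right]
      have := hw1 p₀ hp₀
      have h2 : ‖w‖⁻¹ * ⟪p₀, w⟫ < ‖w‖⁻¹ * c₀ := mul_lt_mul_of_pos_left this (by positivity)
      linarith
    linarith
  have e4 : hsup K₂ (-wh) < -(‖w‖⁻¹ * c₀) := by
    obtain ⟨y, hyK, hy⟩ := (hsup_spec hK₂ hne₂ (-wh)).2
    rw [← hy, inner_neg_right, hwhdef, real_inner_smul_right]
    have h2 : ‖w‖⁻¹ * c₀ < ‖w‖⁻¹ * ⟪y, w⟫ := mul_lt_mul_of_pos_left (hw2 y hyK) (by positivity)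
    linarith
  -- outer tangent, positive side
  refine ⟨?_, ?_, ?_, ?_⟩
  · set F : ℝ → ℝ := fun t => hsup K₁ (γ t) - hsup K₂ (γ t) with hF
    have hFc : Continuous F := ((hsup_cont hK₁ hne₁).comp γcont).sub ((hsup_cont hK₂ hne₂).comp γcont)
    have hF0 : F 0 < 0 := by rw [hF]; simp only [γ0]; linarith
    have hFpi : 0 < F Real.pi := by rw [hF]; simp only [γpi]; linarith
    have : (0:ℝ) ∈ Ioo (F 0) (F Real.pi) := ⟨hF0, hFpi⟩
    obtain ⟨t, ht, hFt⟩ := intermediate_value_Ioo (le_of_lt Real.pi_pos) hFc.continuousOn this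
    refine ⟨γ t, hsup K₁ (γ t), ?_, ?_⟩
    · have hzero : hsup K₂ (γ t) = hsup K₁ (γ t) := by
        rw [hF] at hFt; dsimp at hFt; linarith
      obtain ⟨x, hxK, hx⟩ := (hsup_spec hK₁ hne₁ (γ t)).2
      obtain ⟨y, hyK, hy⟩ := (hsup_spec hK₂ hne₂ (γ t)).2
      exact ⟨γunit t, ⟨x, hxK, hx⟩, ⟨y, hyK, by rw [hy, hzero]⟩,
        (hsup_spec hK₁ hne₁ (γ t)).1,
        fun y hy => le_of_le_of_eq ((hsup_spec hK₂ hne₂ (γ t)).1 y hy) hzero⟩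
    · rw [γJw]
      exact mul_pos (Real.sin_pos_of_pos_of_lt_pi ht.1 ht.2) hnw
  · set F : ℝ → ℝ := fun t => hsup K₁ (γ t) - hsup K₂ (γ t) with hF
    have hFc : Continuous F := ((hsup_cont hK₁ hne₁).comp γcont).sub ((hsup_cont hK₂ hne₂).comp γcont)
    have hF0 : F 0 < 0 := by rw [hF]; simp only [γ0]; linarith
    have hFpi : 0 < F (-Real.pi) := by rw [hF]; simp only [γmpi]; linarith
    have hmem : (0:ℝ) ∈ Ioo (F 0) (F (-Real.pi)) := ⟨hF0, hFpi⟩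
    obtain ⟨t, ht, hFt⟩ := intermediate_value_Ioo' (by linarith [Real.pi_pos] : -Real.pi ≤ 0)
      hFc.continuousOn hmem
    refine ⟨γ t, hsup K₁ (γ t), ?_, ?_⟩
    · have hzero : hsup K₂ (γ t) = hsup K₁ (γ t) := by
        rw [hF] at hFt; dsimp at hFt; linarith
      obtain ⟨x, hxK, hx⟩ := (hsup_spec hK₁ hne₁ (γ t)).2
      obtain ⟨y, hyK, hy⟩ := (hsup_spec hK₂ hne₂ (γ t)).2
      exact ⟨γunit t, ⟨x, hxK, hx⟩, ⟨y, hyK, by rw [hy, hzero]⟩,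
        (hsup_spec hK₁ hne₁ (γ t)).1,
        fun y hy => le_of_le_of_eq ((hsup_spec hK₂ hne₂ (γ t)).1 y hy) hzero⟩
    · rw [γJw]
      have hsin : Real.sin t < 0 := Real.sin_neg_of_neg_of_neg_pi_lt ht.2 ht.1
      exact mul_neg_of_neg_of_pos hsin hnw
  · set G : ℝ → ℝ := fun t => hsup K₁ (γ t) + hsup K₂ (-(γ t)) with hG
    have hGc : Continuous G := ((hsup_cont hK₁ hne₁).comp γcont).add
      ((hsup_cont hK₂ hne₂).comp γcont.neg)
    have hG0 : G 0 < 0 := by rw [hG]; simp only [γ0]; linarith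
    have hGpi : 0 < G Real.pi := by rw [hG]; simp only [γpi, neg_neg]; linarith
    have hmem : (0:ℝ) ∈ Ioo (G 0) (G Real.pi) := ⟨hG0, hGpi⟩
    obtain ⟨t, ht, hGt⟩ := intermediate_value_Ioo (le_of_lt Real.pi_pos) hGc.continuousOn hmem
    refine ⟨γ t, hsup K₁ (γ t), ?_, ?_⟩
    · have hzero : hsup K₂ (-(γ t)) = -hsup K₁ (γ t) := by
        rw [hG] at hGt; dsimp at hGt; linarith
      obtain ⟨x, hxK, hx⟩ := (hsup_spec hK₁ hne₁ (γ t)).2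
      obtain ⟨y, hyK, hy⟩ := (hsup_spec hK₂ hne₂ (-(γ t))).2
      refine ⟨γunit t, ⟨x, hxK, hx⟩, ⟨y, hyK, ?_⟩, (hsup_spec hK₁ hne₁ (γ t)).1, ?_⟩
      · rw [inner_neg_right] at hy
        rw [hzero] at hy
        linarith
      · intro z hz
        have := (hsup_spec hK₂ hne₂ (-(γ t))).1 z hz
        rw [inner_neg_right, hzero] at this
        linarith
    · rw [γJw]
      exact mul_pos (Real.sin_pos_of_pos_of_lt_pi ht.1 ht.2) hnw
  · set G : ℝ → ℝ := fun t => hsup K₁ (γ t) + hsup K₂ (-(γ t)) with hG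
    have hGc : Continuous G := ((hsup_cont hK₁ hne₁).comp γcont).add
      ((hsup_cont hK₂ hne₂).comp γcont.neg)
    have hG0 : G 0 < 0 := by rw [hG]; simp only [γ0]; linarith
    have hGpi : 0 < G (-Real.pi) := by rw [hG]; simp only [γmpi, neg_neg]; linarith
    have hmem : (0:ℝ) ∈ Ioo (G 0) (G (-Real.pi)) := ⟨hG0, hGpi⟩
    obtain ⟨t, ht, hGt⟩ := intermediate_value_Ioo' (by linarith [Real.pi_pos] : -Real.pi ≤ 0)
      hGc.continuousOn hmem
    refine ⟨γ t, hsup K₁ (γ t), ?_, ?_⟩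
    · have hzero : hsup K₂ (-(γ t)) = -hsup K₁ (γ t) := by
        rw [hG] at hGt; dsimp at hGt; linarith
      obtain ⟨x, hxK, hx⟩ := (hsup_spec hK₁ hne₁ (γ t)).2
      obtain ⟨y, hyK, hy⟩ := (hsup_spec hK₂ hne₂ (-(γ t))).2
      refine ⟨γunit t, ⟨x, hxK, hx⟩, ⟨y, hyK, ?_⟩, (hsup_spec hK₁ hne₁ (γ t)).1, ?_⟩
      · rw [inner_neg_right] at hy
        rw [hzero] at hy
        linarith
      · intro z hz
        have := (hsup_spec hK₂ hne₂ (-(γ t))).1 z hz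
        rw [inner_neg_right, hzero] at this
        linarith
    · rw [γJw]
      have hsin : Real.sin t < 0 := Real.sin_neg_of_neg_of_neg_pi_lt ht.2 ht.1
      exact mul_neg_of_neg_of_pos hsin hnw

/- ### Distinctness of the four tangent lines -/

lemma ne_outer_outer {K₁ K₂ : Set Pt} {w u u' : Pt} {c c' : ℝ}
    (h₁int : (interior K₁).Nonempty)
    (ha : OuterLine K₁ K₂ u c) (hb : OuterLine K₁ K₂ u' c')
    (hsa : 0 < ⟪u, J w⟫) (hsb : ⟪u', J w⟫ < 0) : lvl u c ≠ lvl u' c' := by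
  intro h
  rcases lvl_eq_lvl ha.1 hb.1 h with ⟨h1, h2⟩ | ⟨h1, h2⟩
  · rw [h1] at hsb; linarith
  · apply not_flat h₁int (norm_one_unit ha.1) (c := c)
    intro x hx
    have b1 := ha.2.2.2.1 x hx
    have b2 := hb.2.2.2.1 x hx
    rw [h1, h2, inner_neg_right] at b2
    linarith
lemma ne_inner_inner {K₁ K₂ : Set Pt} {w u u' : Pt} {c c' : ℝ}
    (h₁int : (interior K₁).Nonempty)
    (ha : InnerLine K₁ K₂ u c) (hb : InnerLine K₁ K₂ u' c')
    (hsa : 0 < ⟪u, J w⟫) (hsb : ⟪u', J w⟫ < 0) : lvl u c ≠ lvl u' c' := by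
  intro h
  rcases lvl_eq_lvl ha.1 hb.1 h with ⟨h1, h2⟩ | ⟨h1, h2⟩
  · rw [h1] at hsb; linarith
  · apply not_flat h₁int (norm_one_unit ha.1) (c := c)
    intro x hx
    have b1 := ha.2.2.2.1 x hx
    have b2 := hb.2.2.2.1 x hx
    rw [h1, h2, inner_neg_right] at b2
    linarith
lemma ne_outer_inner {K₁ K₂ : Set Pt} {u u' : Pt} {c c' : ℝ}
    (h₁int : (interior K₁).Nonempty) (h₂int : (interior K₂).Nonempty)
    (ha : OuterLine K₁ K₂ u c) (hb : InnerLine K₁ K₂ u' c') : lvl u c ≠ lvl u' c' := by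
  intro h
  rcases lvl_eq_lvl ha.1 hb.1 h with ⟨h1, h2⟩ | ⟨h1, h2⟩
  · apply not_flat h₂int (norm_one_unit ha.1) (c := c)
    intro y hy
    have b1 := ha.2.2.2.2 y hy
    have b2 := hb.2.2.2.2 y hy
    rw [h1, h2] at b2
    linarith
  · apply not_flat h₁int (norm_one_unit ha.1) (c := c)
    intro x hx
    have b1 := ha.2.2.2.1 x hx
    have b2 := hb.2.2.2.1 x hx
    rw [h1, h2, inner_neg_right] at b2
    linarith

lemma outer_props {K₁ K₂ : Set Pt} {u : Pt} {c : ℝ} (h : OuterLine K₁ K₂ u c) :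
    IsLine (lvl u c) ∧ IsTangentTo (lvl u c) K₁ ∧ IsTangentTo (lvl u c) K₂ := by
  obtain ⟨hu, ⟨p, hpK, hp⟩, ⟨q, hqK, hq⟩, hK₁, hK₂⟩ := h
  have hu0 := norm_one_unit hu
  exact ⟨isLine_lvl hu0 hp, tangent_le hu0 hpK hp hK₁, tangent_le hu0 hqK hq hK₂⟩

lemma inner_props {K₁ K₂ : Set Pt} {u : Pt} {c : ℝ} (h : InnerLine K₁ K₂ u c) :
    IsLine (lvl u c) ∧ IsTangentTo (lvl u c) K₁ ∧ IsTangentTo (lvl u c) K₂ := by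
  obtain ⟨hu, ⟨p, hpK, hp⟩, ⟨q, hqK, hq⟩, hK₁, hK₂⟩ := h
  have hu0 := norm_one_unit hu
  exact ⟨isLine_lvl hu0 hp, tangent_le hu0 hpK hp hK₁, tangent_ge hu0 hqK hq hK₂⟩

end FourTangents

open FourTangents in
/-- Two disjoint compact convex sets with nonempty interiors have exactly four common
tangent lines. -/
theorem four_common_tangents (K₁ K₂ : Set Pt) (h₁c : IsCompact K₁) (h₂c : IsCompact K₂)
    (h₁conv : Convex ℝ K₁) (h₂conv : Convex ℝ K₂)
    (h₁int : (interior K₁).Nonempty) (h₂int : (interior K₂).Nonempty)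
    (hdisj : K₁ ∩ K₂ = ∅) :
    ∃ L : Fin 4 → Set Pt, Function.Injective L ∧
      (∀ i, IsLine (L i) ∧ IsTangentTo (L i) K₁ ∧ IsTangentTo (L i) K₂) ∧
      ∀ M : Set Pt, IsLine M → IsTangentTo M K₁ → IsTangentTo M K₂ → ∃ i, M = L i := by
  have hne₁ : K₁.Nonempty := h₁int.mono interior_subset
  have hne₂ : K₂.Nonempty := h₂int.mono interior_subset
  have hdisj' : Disjoint K₁ K₂ := Set.disjoint_iff_inter_eq_empty.mpr hdisj
  -- strict separation
  obtain ⟨f, a, b, hfa, hab, hfb⟩ :=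
    geometric_hahn_banach_compact_closed h₁conv h₁c h₂conv h₂c.isClosed hdisj'
  set w : Pt := (InnerProductSpace.toDual ℝ Pt).symm f with hwdef
  have hwx : ∀ x : Pt, ⟪x, w⟫ = f x := by
    intro x
    rw [real_inner_comm]
    exact InnerProductSpace.toDual_symm_apply
  set c₀ : ℝ := (a + b) / 2 with hc₀def
  have hw1 : ∀ x ∈ K₁, ⟪x, w⟫ < c₀ := by
    intro x hx; rw [hwx]; have := hfa x hx; rw [hc₀def]; linarith
  have hw2 : ∀ y ∈ K₂, c₀ < ⟪y, w⟫ := by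
    intro y hy; rw [hwx]; have := hfb y hy; rw [hc₀def]; linarith
  have hwne : w ≠ 0 := by
    intro h0
    obtain ⟨p₀, hp₀⟩ := hne₁
    obtain ⟨q₀, hq₀⟩ := hne₂
    have h1 := hw1 p₀ hp₀
    have h2 := hw2 q₀ hq₀
    rw [h0, inner_zero_right] at h1 h2
    linarith
  obtain ⟨⟨ua, ca, hOa, hsa⟩, ⟨ub, cb, hOb, hsb⟩, ⟨uc, pc, hIc, hsc⟩, ⟨ud, pd, hId, hsd⟩⟩ :=
    exists_tangents h₁c h₂c hne₁ hne₂ hwne hw1 hw2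
  refine ⟨![lvl ua ca, lvl ub cb, lvl uc pc, lvl ud pd], ?_, ?_, ?_⟩
  · -- injectivity
    have hAB : lvl ua ca ≠ lvl ub cb := ne_outer_outer h₁int hOa hOb hsa hsb
    have hCD : lvl uc pc ≠ lvl ud pd := ne_inner_inner h₁int hIc hId hsc hsd
    have hAC : lvl ua ca ≠ lvl uc pc := ne_outer_inner h₁int h₂int hOa hIc
    have hAD : lvl ua ca ≠ lvl ud pd := ne_outer_inner h₁int h₂int hOa hId
    have hBC : lvl ub cb ≠ lvl uc pc := ne_outer_inner h₁int h₂int hOb hIc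
    have hBD : lvl ub cb ≠ lvl ud pd := ne_outer_inner h₁int h₂int hOb hId
    intro i j hij
    fin_cases i <;> fin_cases j <;>
      simp only [Matrix.cons_val_zero, Matrix.cons_val_one, Matrix.head_cons,
        Matrix.cons_val_two, Matrix.tail_cons, Matrix.cons_val_three, Matrix.head_fin_const,
        Fin.mk_zero, Fin.mk_one] at hij ⊢ <;>
      first
        | rfl
        | exact absurd hij hAB | exact absurd hij.symm hAB
        | exact absurd hij hCD | exact absurd hij.symm hCD
        | exact absurd hij hAC | exact absurd hij.symm hAC
        | exact absurd hij hAD | exact absurd hij.symm hAD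
        | exact absurd hij hBC | exact absurd hij.symm hBC
        | exact absurd hij hBD | exact absurd hij.symm hBD
  · -- each is a tangent line
    intro i
    fin_cases i <;>
      simp only [Matrix.cons_val_zero, Matrix.cons_val_one, Matrix.head_cons,
        Matrix.cons_val_two, Matrix.tail_cons, Matrix.cons_val_three, Matrix.head_fin_const]
    · exact outer_props hOa
    · exact outer_props hOb
    · exact inner_props hIc
    · exact inner_props hId
  · -- completeness
    intro M hM ht₁ ht₂
    obtain ⟨u, c, hu, hMeq, ⟨p, hpK, hpu⟩, ⟨q, hqK, hqu⟩, hK₁b, hside⟩ :=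
      normalizeTangent hM ht₁ ht₂
    have hnp : ⟪u, J w⟫ ≠ 0 :=
      not_parallel hwne (norm_one_unit hu) (hw1 p hpK) (hw2 q hqK) hpu hqu
    rcases hside with hle | hge
    · have hO : OuterLine K₁ K₂ u c := ⟨hu, ⟨p, hpK, hpu⟩, ⟨q, hqK, hqu⟩, hK₁b, hle⟩
      rcases hnp.lt_or_gt with hneg | hpos
      · obtain ⟨he1, he2⟩ := outer_unique hw1 hw2 hOb hO (Or.inr ⟨hsb, hneg⟩)
        refine ⟨1, ?_⟩
        rw [hMeq, ← he1, ← he2]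
        simp
      · obtain ⟨he1, he2⟩ := outer_unique hw1 hw2 hOa hO (Or.inl ⟨hsa, hpos⟩)
        refine ⟨0, ?_⟩
        rw [hMeq, ← he1, ← he2]
        simp
    · have hI : InnerLine K₁ K₂ u c := ⟨hu, ⟨p, hpK, hpu⟩, ⟨q, hqK, hqu⟩, hK₁b, hge⟩
      rcases hnp.lt_or_gt with hneg | hpos
      · obtain ⟨he1, he2⟩ := inner_unique hw1 hw2 hId hI (Or.inr ⟨hsd, hneg⟩)
        refine ⟨3, ?_⟩
        rw [hMeq, ← he1, ← he2]
        simp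
      · obtain ⟨he1, he2⟩ := inner_unique hw1 hw2 hIc hI (Or.inl ⟨hsc, hpos⟩)
        refine ⟨2, ?_⟩
        rw [hMeq, ← he1, ← he2]
        simp
end
end
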